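/- arXiv:2506.16171 — 3 statements merged into one kernel-verified Lean document; each statement's English description precedes it below -/
import Mathlib

section
/- Let T be a finite tree (a nonempty connected acyclic simple graph) and let w : V(T) → ℕ be a weight function with ∑_{v∈V(T)} w(v) ≥ 2. Then there exists an orientation D of T such that 49·R(D,w) ≥ (∑_{v∈V(T)} w(v))². -/
open Finset

variable {V : Type*}

-- `kappa A u v = 1` if `v` is reachable from `u`, and `0` otherwise.
open Classical in
noncomputable def kappa (A : V → V → Prop) (u v : V) : ℕ :=
  if Relation.ReflTransGen A u v then 1 else 0

/-- `R(D, w) = 2 ∑_v C(w(v), 2) + ∑_{(u,v), u ≠ v} w(u) w(v) κ_D(u,v)`. -/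
noncomputable def Rw [Fintype V] [DecidableEq V] (A : V → V → Prop) (w : V → ℕ) : ℕ :=
  2 * ∑ v, Nat.choose (w v) 2 +
    ∑ p ∈ Finset.univ.offDiag, w p.1 * w p.2 * kappa A p.1 p.2

/-- `D` is an orientation of the simple graph `G`: its arcs are exactly one of the
two directions of each edge of `G`, and nothing else. -/
def IsGraphOrientation (G : SimpleGraph V) (D : V → V → Prop) : Prop :=
  (∀ u v, D u v → G.Adj u v) ∧ (∀ u v, G.Adj u v → (D u v ↔ ¬ D v u))

open SimpleGraph




lemma tree_adj_dist_ne [DecidableEq V] {T : SimpleGraph V} (hT : T.IsTree) (r : V) {u v : V}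
    (h : T.Adj u v) : T.dist r u ≠ T.dist r v := by
  intro hd
  obtain ⟨p, hp, hpl⟩ := hT.isConnected.exists_path_of_dist r u
  by_cases hv : v ∈ p.support
  · have h1 : T.dist r v ≤ (p.takeUntil v hv).length := T.dist_le _
    have h2 : (p.takeUntil v hv).length + (p.dropUntil v hv).length = p.length := by
      have := congrArg Walk.length (p.take_spec hv)
      rwa [Walk.length_append] at this
    have h3 : (p.dropUntil v hv).length ≠ 0 := fun h0 =>
      h.ne' (Walk.eq_of_length_eq_zero h0)
    omega
  · have hpath : (p.concat h).IsPath := by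
      rw [← Walk.isPath_reverse_iff, Walk.reverse_concat]
      exact hp.reverse.cons (by simpa [Walk.support_reverse] using hv)
    obtain ⟨q, hq, hql⟩ := hT.isConnected.exists_path_of_dist r v
    have heq := hT.IsAcyclic.path_unique ⟨p.concat h, hpath⟩ ⟨q, hq⟩
    have hl : (p.concat h).length = q.length :=
      congrArg (fun P : T.Path r v => P.1.length) heq
    rw [Walk.length_concat] at hl
    omega

lemma exists_parent {T : SimpleGraph V} (hc : T.Connected) {r u : V} (h : u ≠ r) :
    ∃ p, T.Adj u p ∧ T.dist r p + 1 = T.dist r u := by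
  obtain ⟨p, hp, hpl⟩ := hc.exists_path_of_dist r u
  cases hpr : p.reverse with
  | nil => exact absurd rfl h
  | cons a q =>
      rename_i x
      refine ⟨x, a, ?_⟩
      have h1 : T.dist r x ≤ q.length := by
        simpa [Walk.length_reverse] using T.dist_le q.reverse
      have h2 : q.length + 1 = T.dist r u := by
        have := congrArg Walk.length hpr
        simp [Walk.length_reverse] at this
        omega
      have h3 : T.dist r u ≤ T.dist r x + 1 := by
        calc T.dist r u ≤ T.dist r x + T.dist x u := hc.dist_triangle
        _ ≤ T.dist r x + 1 := by
            have : T.dist x u ≤ 1 := by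
              simpa using T.dist_le (Walk.cons a.symm Walk.nil)
            omega
      omega




lemma parent_unique [DecidableEq V] {T : SimpleGraph V} (hT : T.IsTree) {r u v v' : V}
    (hv : T.Adj u v) (hv' : T.Adj u v')
    (hd : T.dist r v + 1 = T.dist r u) (hd' : T.dist r v' + 1 = T.dist r u) : v = v' := by
  by_contra hne
  obtain ⟨p, hp, hpl⟩ := hT.isConnected.exists_path_of_dist r v
  obtain ⟨p', hp', hpl'⟩ := hT.isConnected.exists_path_of_dist r v'
  have hu : u ∉ p.support := by
    intro hmem
    have h1 : T.dist r u ≤ (p.takeUntil u hmem).length := T.dist_le _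
    have h2 := p.length_takeUntil_le hmem
    omega
  have hu' : u ∉ p'.support := by
    intro hmem
    have h1 : T.dist r u ≤ (p'.takeUntil u hmem).length := T.dist_le _
    have h2 := p'.length_takeUntil_le hmem
    omega
  have hP : (p.concat hv.symm).IsPath := by
    rw [← Walk.isPath_reverse_iff, Walk.reverse_concat]
    exact hp.reverse.cons (by simpa [Walk.support_reverse] using hu)
  have hP' : (p'.concat hv'.symm).IsPath := by
    rw [← Walk.isPath_reverse_iff, Walk.reverse_concat]
    exact hp'.reverse.cons (by simpa [Walk.support_reverse] using hu')
  have heq := hT.IsAcyclic.path_unique ⟨p.concat hv.symm, hP⟩ ⟨p'.concat hv'.symm, hP'⟩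
  have hv'mem : v' ∈ (p.concat hv.symm).support := by
    have : v' ∈ (p'.concat hv'.symm).support := by
      simp [Walk.support_concat]
    rwa [show p.concat hv.symm = p'.concat hv'.symm from
      congrArg (fun P : T.Path r u => P.1) heq]
  rw [Walk.support_concat] at hv'mem
  rw [List.mem_append, List.mem_singleton] at hv'mem
  rcases hv'mem with hmem | hequ
  · -- v' on shortest path p from r to v
    have h1 : T.dist r v' ≤ (p.takeUntil v' hmem).length := T.dist_le _
    have h2 : (p.takeUntil v' hmem).length + (p.dropUntil v' hmem).length = p.length := by
      have := congrArg Walk.length (p.take_spec hmem)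
      rwa [Walk.length_append] at this
    have h3 : (p.dropUntil v' hmem).length ≠ 0 := fun h0 =>
      hne ((Walk.eq_of_length_eq_zero h0)).symm
    omega
  · exact hv'.ne' hequ




open Classical in
noncomputable def par (T : SimpleGraph V) (c u : V) : V :=
  if h : ∃ p, T.Adj u p ∧ T.dist c p + 1 = T.dist c u then h.choose else c

lemma par_spec {T : SimpleGraph V} (hc : T.Connected) {c u : V} (h : u ≠ c) :
    T.Adj u (par T c u) ∧ T.dist c (par T c u) + 1 = T.dist c u := by
  have he := exists_parent hc h
  rw [par, dif_pos he]
  exact he.choose_spec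

open Classical in
noncomputable def brAux (T : SimpleGraph V) (c : V) : ℕ → V → V
  | 0, u => u
  | n + 1, u => if par T c u = c then u else brAux T c n (par T c u)

noncomputable def br (T : SimpleGraph V) (c u : V) : V := brAux T c (T.dist c u) u

lemma br_eq_self {T : SimpleGraph V} (hc : T.Connected) {c u : V} (h : u ≠ c)
    (hp : par T c u = c) : br T c u = u := by
  have h2 := (par_spec hc h).2
  have hd : T.dist c u = 1 := by rw [← h2, hp, SimpleGraph.dist_self]
  rw [br, hd]
  simp [brAux, hp]

lemma br_eq_par {T : SimpleGraph V} (hc : T.Connected) {c u : V} (h : u ≠ c)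
    (hp : par T c u ≠ c) : br T c u = br T c (par T c u) := by
  have h2 := (par_spec hc h).2
  rw [br, br, ← h2]
  simp [brAux, hp]

lemma br_adj [DecidableEq V] {T : SimpleGraph V} (hT : T.IsTree) {c : V} :
    ∀ n u, T.dist c u = n → u ≠ c → T.Adj c (br T c u) := by
  intro n
  induction n using Nat.strong_induction_on with
  | _ n ih =>
    intro u hd hu
    by_cases hp : par T c u = c
    · rw [br_eq_self hT.isConnected hu hp]
      have h1 := (par_spec hT.isConnected hu).1
      rw [hp] at h1
      exact h1.symm
    · rw [br_eq_par hT.isConnected hu hp]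
      have h2 := (par_spec hT.isConnected hu).2
      exact ih (T.dist c (par T c u)) (by omega) _ rfl hp

lemma br_dist [DecidableEq V] {T : SimpleGraph V} (hT : T.IsTree) {c x : V} (hcx : T.Adj c x) :
    ∀ n u, T.dist c u = n → u ≠ c →
      (br T c u = x → T.dist x u + 1 = T.dist c u) ∧
      (br T c u ≠ x → T.dist x u = T.dist c u + 1) := by
  have hconn := hT.isConnected
  have hdcx : T.dist c x = 1 := dist_eq_one_iff_adj.mpr hcx
  intro n
  induction n using Nat.strong_induction_on with
  | _ n ih =>
    intro u hd hu
    have hspec := par_spec hconn hu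
    set p := par T c u with hpdef
    have hd1 : 1 ≤ T.dist c u := hconn.pos_dist_of_ne (Ne.symm hu)
    by_cases hp : p = c
    · -- dist c u = 1
      have hdcu : T.dist c u = 1 := by
        have h2 := hspec.2
        rw [hp, SimpleGraph.dist_self] at h2
        omega
      have hbr : br T c u = u := br_eq_self hconn hu hp
      have hadjcu : T.Adj c u := by
        have h1 := hspec.1
        rw [hp] at h1
        exact h1.symm
      constructor
      · intro hbx
        rw [hbr] at hbx
        subst hbx
        simp [hdcu]
      · intro hbx
        rw [hbr] at hbx
        -- u ≠ x, both adjacent to c: dist x u = 2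
        have hne2 : ¬ T.Adj x u := by
          intro hadj
          exact tree_adj_dist_ne hT c hadj (by
            rw [hdcx, hdcu])
        have hle : T.dist x u ≤ 2 := by
          calc T.dist x u ≤ T.dist x c + T.dist c u := hconn.dist_triangle
          _ ≤ 2 := by rw [SimpleGraph.dist_comm, hdcx, hdcu]
        have hge : T.dist x u ≠ 0 := by
          rw [dist_ne_zero_iff_ne_and_reachable]
          exact ⟨fun he => hbx he.symm, hconn.preconnected x u⟩
        have hne1 : T.dist x u ≠ 1 := fun h1 => hne2 (dist_eq_one_iff_adj.mp h1)
        omega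
    · -- p ≠ c, dist c u ≥ 2
      have hdp : T.dist c p + 1 = T.dist c u := hspec.2
      have hdp1 : 1 ≤ T.dist c p := hconn.pos_dist_of_ne (Ne.symm hp)
      have hbr : br T c u = br T c p := br_eq_par hconn hu hp
      have IH := ih (T.dist c p) (by omega) p rfl hp
      have hadjup : T.Adj u p := hspec.1
      constructor
      · intro hbx
        rw [hbr] at hbx
        have hxp : T.dist x p + 1 = T.dist c p := IH.1 hbx
        have hle : T.dist x u ≤ T.dist x p + 1 := by
          calc T.dist x u ≤ T.dist x p + T.dist p u := hconn.dist_triangle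
          _ ≤ T.dist x p + 1 := by
              have : T.dist p u ≤ 1 := by
                simpa using T.dist_le (Walk.cons hadjup.symm Walk.nil)
              omega
        have hge : T.dist c u ≤ T.dist c x + T.dist x u := hconn.dist_triangle
        rw [hdcx] at hge
        omega
      · intro hbx
        rw [hbr] at hbx
        have hxp : T.dist x p = T.dist c p + 1 := IH.2 hbx
        have hle : T.dist x u ≤ T.dist x p + 1 := by
          calc T.dist x u ≤ T.dist x p + T.dist p u := hconn.dist_triangle
          _ ≤ T.dist x p + 1 := by
              have : T.dist p u ≤ 1 := by
                simpa using T.dist_le (Walk.cons hadjup.symm Walk.nil)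
              omega
        have hge : T.dist c u ≤ T.dist c x + T.dist x u := hconn.dist_triangle
        rw [hdcx] at hge
        have hnd : T.dist x u ≠ T.dist x p := tree_adj_dist_ne hT x hadjup
        -- exclude dist x u = dist c u - 1
        have hexcl : T.dist x u ≠ T.dist c u - 1 := by
          intro hxu
          have hux : u ≠ x := by
            intro he
            have h0 : T.dist x u = 0 := by rw [he, SimpleGraph.dist_self]
            omega
          obtain ⟨q, hadjuq, hq⟩ := exists_parent hconn (r := x) hux
          rw [hxu] at hq
          -- dist x q = dist c u - 2
          have hcq_le : T.dist c q ≤ 1 + T.dist x q := by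
            have := hconn.dist_triangle (u := c) (v := x) (w := q)
            rw [hdcx] at this
            exact this
          have hcq_ge : T.dist c u ≤ T.dist c q + 1 := by
            have := hconn.dist_triangle (u := c) (v := q) (w := u)
            have hqu : T.dist q u ≤ 1 := by
              simpa using T.dist_le (Walk.cons hadjuq.symm Walk.nil)
            omega
          have hq_eq : T.dist c q + 1 = T.dist c u := by omega
          have : q = p := parent_unique hT hadjuq hadjup hq_eq hdp
          subst this
          omega
        omega




def orient (T : SimpleGraph V) (c : V) (A : Finset V) : V → V → Prop := fun u v =>
  T.Adj u v ∧ ((T.dist c v < T.dist c u ∧ br T c u ∈ A) ∨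
    (T.dist c u < T.dist c v ∧ br T c v ∉ A))

lemma orient_isOrientation [DecidableEq V] {T : SimpleGraph V} (hT : T.IsTree) (c : V)
    (A : Finset V) : (∀ u v, orient T c A u v → T.Adj u v) ∧
      (∀ u v, T.Adj u v → (orient T c A u v ↔ ¬ orient T c A v u)) := by
  refine ⟨fun u v h => h.1, fun u v huv => ?_⟩
  have hne := tree_adj_dist_ne hT c huv
  rcases lt_or_gt_of_ne hne with h | h
  · simp only [orient]
    constructor
    · rintro ⟨-, hor⟩
      rcases hor with ⟨hlt, -⟩ | ⟨hlt, hbr⟩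
      · omega
      · rintro ⟨-, hor'⟩
        rcases hor' with ⟨hlt', hbr'⟩ | ⟨hlt', -⟩
        · exact hbr hbr'
        · omega
    · intro hno
      refine ⟨huv, Or.inr ⟨h, fun hbr => hno ⟨huv.symm, Or.inl ⟨h, hbr⟩⟩⟩⟩
  · simp only [orient]
    constructor
    · rintro ⟨-, hor⟩
      rcases hor with ⟨hlt, hbr⟩ | ⟨hlt, -⟩
      · rintro ⟨-, hor'⟩
        rcases hor' with ⟨hlt', -⟩ | ⟨hlt', hbr'⟩
        · omega
        · exact hbr' hbr
      · omega
    · intro hno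
      by_cases hbr : br T c u ∈ A
      · exact ⟨huv, Or.inl ⟨h, hbr⟩⟩
      · exact absurd ⟨huv.symm, Or.inr ⟨h, hbr⟩⟩ hno

lemma reach_to_c {T : SimpleGraph V} (hc : T.Connected) {c : V} (A : Finset V) :
    ∀ n u, T.dist c u = n → u ≠ c → br T c u ∈ A →
      Relation.ReflTransGen (orient T c A) u c := by
  intro n
  induction n using Nat.strong_induction_on with
  | _ n ih =>
    intro u hd hu hbr
    have hspec := par_spec hc hu
    have hstep : orient T c A u (par T c u) := ⟨hspec.1, Or.inl ⟨by omega, hbr⟩⟩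
    by_cases hp : par T c u = c
    · rw [hp] at hstep
      exact Relation.ReflTransGen.single hstep
    · have hbr' : br T c (par T c u) ∈ A := by
        rw [← br_eq_par hc hu hp]; exact hbr
      exact Relation.ReflTransGen.head hstep
        (ih (T.dist c (par T c u)) (by omega) _ rfl hp hbr')

lemma reach_from_c {T : SimpleGraph V} (hc : T.Connected) {c : V} (A : Finset V) :
    ∀ n v, T.dist c v = n → v ≠ c → br T c v ∉ A →
      Relation.ReflTransGen (orient T c A) c v := by
  intro n
  induction n using Nat.strong_induction_on with
  | _ n ih =>
    intro v hd hv hbr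
    have hspec := par_spec hc hv
    have hstep : orient T c A (par T c v) v := ⟨hspec.1.symm, Or.inr ⟨by omega, hbr⟩⟩
    by_cases hp : par T c v = c
    · rw [hp] at hstep
      exact Relation.ReflTransGen.single hstep
    · have hbr' : br T c (par T c v) ∉ A := by
        rw [← br_eq_par hc hv hp]; exact hbr
      exact Relation.ReflTransGen.tail
        (ih (T.dist c (par T c v)) (by omega) _ rfl hp hbr') hstep




open Classical in
lemma centroid_bound [Fintype V] [DecidableEq V] {T : SimpleGraph V} (hT : T.IsTree) (w : V → ℕ)
    {c : V} (hc : ∀ y, ∑ u, w u * T.dist c u ≤ ∑ u, w u * T.dist y u)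
    {x : V} (hx : T.Adj c x) :
    2 * (∑ u ∈ univ.filter (fun u => u ≠ c ∧ br T c u = x), w u) ≤ ∑ u, w u := by
  have hdcx : T.dist c x = 1 := dist_eq_one_iff_adj.mpr hx
  have key : ∀ u : V, w u * T.dist x u + (if u ≠ c ∧ br T c u = x then 2 * w u else 0)
      = w u * T.dist c u + w u := by
    intro u
    by_cases h1 : u = c
    · subst h1
      have hxc : T.dist x u = 1 := by rw [SimpleGraph.dist_comm]; exact hdcx
      simp [hxc, SimpleGraph.dist_self]
    · by_cases h2 : br T c u = x
      · have hh := (br_dist hT hx (T.dist c u) u rfl h1).1 h2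
        rw [if_pos ⟨h1, h2⟩, ← hh]
        ring
      · have hh := (br_dist hT hx (T.dist c u) u rfl h1).2 h2
        rw [if_neg (by tauto), hh]
        ring
  have hsum : (∑ u, w u * T.dist x u) +
      (∑ u, if u ≠ c ∧ br T c u = x then 2 * w u else 0)
      = (∑ u, w u * T.dist c u) + ∑ u, w u := by
    rw [← Finset.sum_add_distrib, ← Finset.sum_add_distrib]
    exact Finset.sum_congr rfl (fun u _ => key u)
  have hfil : (∑ u, if u ≠ c ∧ br T c u = x then 2 * w u else 0)
      = 2 * ∑ u ∈ univ.filter (fun u => u ≠ c ∧ br T c u = x), w u := by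
    rw [Finset.mul_sum, Finset.sum_filter]
  have := hc x
  omega

lemma arith2 (a b m W : ℕ) (hkey : 2 * a ≤ 2 * b + W) (hW : W = m + (a + b))
    (hba : b ≤ a) (hcase : 7 * m < W) : W ^ 2 ≤ 49 * (a * b) := by
  have h1 : (2 : ℤ) * a ≤ 2 * b + W := by exact_mod_cast hkey
  have h2 : (m : ℤ) + (a + b) = W := by exact_mod_cast hW.symm
  have h3 : (b : ℤ) ≤ a := by exact_mod_cast hba
  have h4 : (7 : ℤ) * m < W := by exact_mod_cast hcase
  have h5 : (0 : ℤ) ≤ m := by positivity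
  have h8 : (0 : ℤ) ≤ W := by positivity
  have h9 : (0 : ℤ) ≤ a := by positivity
  have h10 : (0 : ℤ) ≤ b := by positivity
  have h6 : (0 : ℤ) ≤ (7 * (a + b) - 6 * W) * (7 * (a + b) + 6 * W) :=
    mul_nonneg (by linarith) (by linarith)
  have h7 : (0 : ℤ) ≤ (W - (2 * a - 2 * b)) * (W + (2 * a - 2 * b)) :=
    mul_nonneg (by linarith) (by linarith)
  have hz : ((W : ℤ)) ^ 2 ≤ 49 * ((a : ℤ) * b) := by nlinarith [h6, h7]
  exact_mod_cast hz

lemma arith1 (a b k W : ℕ) (h2 : W ≤ 7 * (k + a + b)) (hcase : W ≤ 7 * (k + 1)) :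
    W ^ 2 ≤ 49 * ((k + 1) * k + (a * (k + 1) + (k + 1) * b + a * b)) := by
  calc W ^ 2 = W * W := sq W
  _ ≤ (7 * (k + 1)) * (7 * (k + a + b)) := Nat.mul_le_mul hcase h2
  _ ≤ 49 * ((k + 1) * k + (a * (k + 1) + (k + 1) * b + a * b)) := by nlinarith []


/-- Every finite tree with total weight at least 2 has an orientation `D` with
`49 R(D, w) ≥ (∑_v w(v))²`. -/
theorem stmt10 {V : Type*} [Fintype V] [DecidableEq V] (T : SimpleGraph V)
    (hT : T.IsTree) (w : V → ℕ) (hw : 2 ≤ ∑ v, w v) :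
    ∃ D : V → V → Prop, IsGraphOrientation T D ∧ (∑ v, w v) ^ 2 ≤ 49 * Rw D w := by
  classical
  have hconn := hT.isConnected
  have hne : Nonempty V := hconn.nonempty
  obtain ⟨c, -, hcmin⟩ := Finset.exists_min_image (univ : Finset V)
    (fun y => ∑ u, w u * T.dist y u) univ_nonempty
  have hcmin' : ∀ y, ∑ u, w u * T.dist c u ≤ ∑ u, w u * T.dist y u :=
    fun y => hcmin y (mem_univ y)
  set W := ∑ v, w v with hWdef
  set s : V → ℕ := fun x => ∑ u ∈ univ.filter (fun u => u ≠ c ∧ br T c u = x), w u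
    with hsdef
  have hcent : ∀ x, T.Adj c x → 2 * s x ≤ W := fun x hx => centroid_bound hT w hcmin' hx
  set fa : Finset V → ℕ := fun A => ∑ u ∈ univ.filter (fun u => u ≠ c ∧ br T c u ∈ A), w u
    with hfadef
  set fb : Finset V → ℕ := fun A => ∑ u ∈ univ.filter (fun u => u ≠ c ∧ br T c u ∉ A), w u
    with hfbdef
  obtain ⟨A₀, -, hA₀⟩ := Finset.exists_min_image (univ : Finset (Finset V))
    (fun A => ((fa A : ℤ) - fb A).natAbs) univ_nonempty
  have hcompl : ∀ B : Finset V, fa Bᶜ = fb B ∧ fb Bᶜ = fa B := by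
    intro B
    constructor
    · rw [hfadef, hfbdef]
      exact Finset.sum_congr (Finset.filter_congr (fun u _ => by simp)) (fun _ _ => rfl)
    · rw [hfadef, hfbdef]
      exact Finset.sum_congr (Finset.filter_congr (fun u _ => by simp)) (fun _ _ => rfl)
  set A : Finset V := if fb A₀ ≤ fa A₀ then A₀ else A₀ᶜ with hAdef
  have hba : fb A ≤ fa A := by
    rw [hAdef]
    by_cases h : fb A₀ ≤ fa A₀
    · simpa [h] using h
    · rw [if_neg h, (hcompl A₀).1, (hcompl A₀).2]
      omega
  have hmin : ∀ B : Finset V, ((fa A : ℤ) - fb A).natAbs ≤ ((fa B : ℤ) - fb B).natAbs := by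
    intro B
    have h0 := hA₀ B (mem_univ B)
    rw [hAdef]
    by_cases h : fb A₀ ≤ fa A₀
    · rw [if_pos h]; exact h0
    · rw [if_neg h, (hcompl A₀).1, (hcompl A₀).2]
      omega
  set a := fa A with hadef
  set b := fb A with hbdef
  set m := w c with hmdef
  -- key balance inequality
  have hkey : 2 * a ≤ 2 * b + W := by
    rcases Nat.eq_or_lt_of_le hba with heq | hlt
    · omega
    · have hapos : 0 < a := by omega
      obtain ⟨u₀, hu₀mem, hu₀w⟩ : ∃ u₀ ∈ univ.filter (fun u => u ≠ c ∧ br T c u ∈ A), w u₀ ≠ 0 := by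
        by_contra hno
        push_neg at hno
        have : fa A = 0 := Finset.sum_eq_zero hno
        omega
      simp only [Finset.mem_filter] at hu₀mem
      obtain ⟨-, hu₀c, hu₀A⟩ := hu₀mem
      have hxA : br T c u₀ ∈ A := hu₀A
      have hxadj : T.Adj c (br T c u₀) := br_adj hT (T.dist c u₀) u₀ rfl hu₀c
      have hsx : 1 ≤ s (br T c u₀) := by
        have hmem : u₀ ∈ univ.filter (fun u => u ≠ c ∧ br T c u = br T c u₀) := by
          simp [hu₀c]
        have h1 := Finset.single_le_sum (f := w) (fun i _ => Nat.zero_le (w i)) hmem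
        simp only [hsdef]
        omega
      have h2sx : 2 * s (br T c u₀) ≤ W := hcent _ hxadj
      have hsplit_a : fa A = fa (A.erase (br T c u₀)) + s (br T c u₀) := by
        have hset : univ.filter (fun u => u ≠ c ∧ br T c u ∈ A)
            = univ.filter (fun u => u ≠ c ∧ br T c u ∈ A.erase (br T c u₀))
              ∪ univ.filter (fun u => u ≠ c ∧ br T c u = br T c u₀) := by
          ext u
          simp only [Finset.mem_union, Finset.mem_filter, Finset.mem_erase, Finset.mem_univ,
            true_and]
          constructor
          · rintro ⟨h1, h2⟩
            by_cases hx' : br T c u = br T c u₀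
            · exact Or.inr ⟨h1, hx'⟩
            · exact Or.inl ⟨h1, hx', h2⟩
          · rintro (⟨h1, -, h2⟩ | ⟨h1, h2⟩)
            · exact ⟨h1, h2⟩
            · exact ⟨h1, h2 ▸ hxA⟩
        have hdisj : Disjoint (univ.filter (fun u => u ≠ c ∧ br T c u ∈ A.erase (br T c u₀)))
            (univ.filter (fun u => u ≠ c ∧ br T c u = br T c u₀)) := by
          rw [Finset.disjoint_left]
          intro u hu1 hu2
          simp only [Finset.mem_filter, Finset.mem_erase] at hu1 hu2
          exact hu1.2.2.1 hu2.2.2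
        rw [hfadef, hsdef]
        simp only []
        rw [hset, Finset.sum_union hdisj]
      have hsplit_b : fb (A.erase (br T c u₀)) = fb A + s (br T c u₀) := by
        have hset : univ.filter (fun u => u ≠ c ∧ br T c u ∉ A.erase (br T c u₀))
            = univ.filter (fun u => u ≠ c ∧ br T c u ∉ A)
              ∪ univ.filter (fun u => u ≠ c ∧ br T c u = br T c u₀) := by
          ext u
          simp only [Finset.mem_union, Finset.mem_filter, Finset.mem_erase, Finset.mem_univ,
            true_and]
          constructor
          · rintro ⟨h1, h2⟩
            by_cases hx' : br T c u = br T c u₀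
            · exact Or.inr ⟨h1, hx'⟩
            · exact Or.inl ⟨h1, fun hmem => h2 ⟨hx', hmem⟩⟩
          · rintro (⟨h1, h2⟩ | ⟨h1, h2⟩)
            · exact ⟨h1, fun hmem => h2 hmem.2⟩
            · exact ⟨h1, fun hmem => hmem.1 h2⟩
        have hdisj : Disjoint (univ.filter (fun u => u ≠ c ∧ br T c u ∉ A))
            (univ.filter (fun u => u ≠ c ∧ br T c u = br T c u₀)) := by
          rw [Finset.disjoint_left]
          intro u hu1 hu2
          simp only [Finset.mem_filter, Finset.mem_erase] at hu1 hu2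
          exact hu1.2.2 (hu2.2.2 ▸ hxA)
        rw [hfbdef, hsdef]
        simp only []
        rw [hset, Finset.sum_union hdisj]
      have hminE := hmin (A.erase (br T c u₀))
      omega
  -- the orientation
  refine ⟨orient T c A, orient_isOrientation hT c A, ?_⟩
  set P := univ.filter (fun u => u ≠ c ∧ br T c u ∈ A) with hPdef
  set Q := univ.filter (fun u => u ≠ c ∧ br T c u ∉ A) with hQdef
  have haP : a = ∑ u ∈ P, w u := rfl
  have hbQ : b = ∑ u ∈ Q, w u := rfl
  have hPQdisj : Disjoint P Q := by
    rw [Finset.disjoint_left]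
    intro u h1' h2'
    simp only [hPdef, hQdef, Finset.mem_filter] at h1' h2'
    exact h2'.2.2 h1'.2.2
  have hcP : c ∉ P := by simp [hPdef]
  have hcQ : c ∉ Q := by simp [hQdef]
  have hW : W = m + (a + b) := by
    have h1 : W = w c + ∑ u ∈ univ.erase c, w u := (Finset.add_sum_erase _ w (mem_univ c)).symm
    have h2 : univ.erase c = P ∪ Q := by
      ext u
      simp only [Finset.mem_erase, Finset.mem_union, hPdef, hQdef, Finset.mem_filter,
        Finset.mem_univ, true_and]
      tauto
    rw [h1, h2, Finset.sum_union hPQdisj, ← haP, ← hbQ, ← hmdef]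
  have hk1 : ∀ u ∈ P, kappa (orient T c A) u c = 1 := by
    intro u hu
    simp only [hPdef, Finset.mem_filter] at hu
    rw [kappa, if_pos (reach_to_c hconn A (T.dist c u) u rfl hu.2.1 hu.2.2)]
  have hk2 : ∀ v ∈ Q, kappa (orient T c A) c v = 1 := by
    intro v hv
    simp only [hQdef, Finset.mem_filter] at hv
    rw [kappa, if_pos (reach_from_c hconn A (T.dist c v) v rfl hv.2.1 hv.2.2)]
  have hk3 : ∀ u ∈ P, ∀ v ∈ Q, kappa (orient T c A) u v = 1 := by
    intro u hu v hv
    simp only [hPdef, Finset.mem_filter] at hu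
    simp only [hQdef, Finset.mem_filter] at hv
    rw [kappa, if_pos ((reach_to_c hconn A (T.dist c u) u rfl hu.2.1 hu.2.2).trans
      (reach_from_c hconn A (T.dist c v) v rfl hv.2.1 hv.2.2))]
  set S1 : Finset (V × V) := P ×ˢ {c} with hS1def
  set S2 : Finset (V × V) := {c} ×ˢ Q with hS2def
  set S3 : Finset (V × V) := P ×ˢ Q with hS3def
  have hsub : S1 ∪ S2 ∪ S3 ⊆ univ.offDiag := by
    intro p hp
    simp only [hS1def, hS2def, hS3def, Finset.mem_union, Finset.mem_product,
      Finset.mem_singleton] at hp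
    rw [Finset.mem_offDiag]
    refine ⟨mem_univ _, mem_univ _, ?_⟩
    rcases hp with (⟨hp1, hp2⟩ | ⟨hp1, hp2⟩) | ⟨hp1, hp2⟩
    · simp only [hPdef, Finset.mem_filter] at hp1
      rw [hp2]; exact hp1.2.1
    · simp only [hQdef, Finset.mem_filter] at hp2
      rw [hp1]
      exact Ne.symm hp2.2.1
    · intro he
      simp only [hPdef, Finset.mem_filter] at hp1
      simp only [hQdef, Finset.mem_filter] at hp2
      exact hp2.2.2 (he ▸ hp1.2.2)
  have hd12 : Disjoint S1 S2 := by
    rw [Finset.disjoint_left]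
    rintro ⟨p1, p2⟩ h1' h2'
    simp only [hS1def, hS2def, Finset.mem_product, Finset.mem_singleton] at h1' h2'
    exact hcP (h2'.1 ▸ h1'.1)
  have hd123 : Disjoint (S1 ∪ S2) S3 := by
    rw [Finset.disjoint_left]
    rintro ⟨p1, p2⟩ h1' h2'
    simp only [hS1def, hS2def, hS3def, Finset.mem_union, Finset.mem_product,
      Finset.mem_singleton] at h1' h2'
    rcases h1' with ⟨-, h1'⟩ | ⟨h1', -⟩
    · exact hcQ (h1' ▸ h2'.2)
    · exact hcP (h1' ▸ h2'.1)
  have hgesub : ∑ p ∈ S1 ∪ S2 ∪ S3, w p.1 * w p.2 * kappa (orient T c A) p.1 p.2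
      ≤ ∑ p ∈ univ.offDiag, w p.1 * w p.2 * kappa (orient T c A) p.1 p.2 :=
    Finset.sum_le_sum_of_subset hsub
  have hS1sum : ∑ p ∈ S1, w p.1 * w p.2 * kappa (orient T c A) p.1 p.2 = a * m := by
    rw [hS1def, Finset.sum_product]
    rw [haP, hmdef, Finset.sum_mul]
    refine Finset.sum_congr rfl (fun u hu => ?_)
    rw [Finset.sum_singleton, hk1 u hu, mul_one]
  have hS2sum : ∑ p ∈ S2, w p.1 * w p.2 * kappa (orient T c A) p.1 p.2 = m * b := by
    rw [hS2def, Finset.sum_product, Finset.sum_singleton]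
    rw [hbQ, hmdef, Finset.mul_sum]
    refine Finset.sum_congr rfl (fun v hv => ?_)
    rw [hk2 v hv, mul_one]
  have hS3sum : ∑ p ∈ S3, w p.1 * w p.2 * kappa (orient T c A) p.1 p.2 = a * b := by
    rw [hS3def, Finset.sum_product]
    rw [haP, hbQ, Finset.sum_mul_sum]
    refine Finset.sum_congr rfl (fun u hu => ?_)
    refine Finset.sum_congr rfl (fun v hv => ?_)
    rw [hk3 u hu v hv, mul_one]
  have hge : a * m + m * b + a * b
      ≤ ∑ p ∈ univ.offDiag, w p.1 * w p.2 * kappa (orient T c A) p.1 p.2 := by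
    rw [← hS1sum, ← hS2sum, ← hS3sum, ← Finset.sum_union hd12, ← Finset.sum_union hd123]
    exact hgesub
  have hch : m * (m - 1) ≤ 2 * ∑ v, Nat.choose (w v) 2 := by
    have h1 : Nat.choose (w c) 2 ≤ ∑ v, Nat.choose (w v) 2 :=
      Finset.single_le_sum (f := fun v => Nat.choose (w v) 2) (fun i _ => Nat.zero_le _)
        (mem_univ c)
    rw [← hmdef] at h1
    have h2 : m * (m - 1) = 2 * Nat.choose m 2 := by
      rw [Nat.choose_two_right, Nat.two_mul_div_two_of_even (Nat.even_mul_pred_self m)]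
    omega
  have hRw : m * (m - 1) + (a * m + m * b + a * b) ≤ Rw (orient T c A) w := by
    rw [Rw]
    omega
  clear_value a b m W
  rcases le_or_gt W (7 * m) with hcase | hcase
  · have hm1 : 1 ≤ m := by omega
    obtain ⟨k, hk⟩ : ∃ k, m = k + 1 := ⟨m - 1, by omega⟩
    have hh := arith1 a b k W (by omega) (by omega)
    refine le_trans hh (Nat.mul_le_mul_left _ ?_)
    rw [hk] at hRw
    simpa [Nat.add_sub_cancel] using hRw
  · exact le_trans (arith2 a b m W hkey hW hba hcase)
      (Nat.mul_le_mul_left _ (le_trans (by omega) hRw))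
end

section
/- Let G = (V, E, A) be a mixed graph on a finite vertex set V whose underlying graph UG(G) is connected and whose undirected edge set E forms a forest (in particular this holds whenever G is an acyclic mixed graph with connected underlying graph), let k = |A| ≥ 1, and let w : V → ℕ be a weight function. Suppose G admits an orientation D₁ with R(D₁,w) ≥ 1. Then there exists an orientation D of G with 196·k²·R(D,w) ≥ (∑_{v∈V} w(v))². -/
open Finset

variable {V : Type*}

/-- A mixed graph: a set of undirected edges (unordered pairs of distinct vertices)
together with a set of arcs (ordered pairs of distinct vertices). -/
structure MixedGraph (V : Type*) where
  edges : Finset (Sym2 V)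
  arcs : Finset (V × V)
  edges_not_diag : ∀ e ∈ edges, ¬ e.IsDiag
  arcs_ne : ∀ a ∈ arcs, a.1 ≠ a.2

namespace MixedGraph

/-- The simple graph formed by the undirected edges of `G`. -/
def edgeGraph (G : MixedGraph V) : SimpleGraph V where
  Adj u v := s(u, v) ∈ G.edges
  symm := by
    constructor
    intro u v h
    rwa [Sym2.eq_swap] at h
  loopless := by
    constructor
    intro v h
    exact G.edges_not_diag _ h (Sym2.mk_isDiag_iff.mpr rfl)

/-- The underlying graph of `G`: edges plus (forgotten) arcs. -/
def UG (G : MixedGraph V) : SimpleGraph V where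
  Adj u v := s(u, v) ∈ G.edges ∨ (u, v) ∈ G.arcs ∨ (v, u) ∈ G.arcs
  symm := by
    constructor
    intro u v h
    rcases h with h | h | h
    · left; rwa [Sym2.eq_swap] at h
    · right; right; exact h
    · right; left; exact h
  loopless := by
    constructor
    intro v h
    rcases h with h | h | h
    · exact G.edges_not_diag _ h (Sym2.mk_isDiag_iff.mpr rfl)
    · exact G.arcs_ne _ h rfl
    · exact G.arcs_ne _ h rfl

/-- The arc relation of the orientation of `G` determined by the choice `o` of
directions for the undirected edges: all arcs of `G` together with the arcs of `o`. -/
def dig (G : MixedGraph V) (o : V → V → Prop) : V → V → Prop :=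
  fun u v => (u, v) ∈ G.arcs ∨ o u v

/-- The set of vertices incident to an arc of `G`. -/
def arcVerts (G : MixedGraph V) : Set V := {v | ∃ a ∈ G.arcs, a.1 = v ∨ a.2 = v}

/-- `G` is dismembered: every undirected component of `G` contains at most one vertex
incident to an arc, or contains exactly two vertices incident to arcs, each of them
incident to exactly one arc. -/
def Dismembered [DecidableEq V] (G : MixedGraph V) : Prop :=
  ∀ c : G.edgeGraph.ConnectedComponent,
    (c.supp ∩ G.arcVerts).Subsingleton ∨
      ∃ a b : V, a ≠ b ∧ c.supp ∩ G.arcVerts = {a, b} ∧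
        (G.arcs.filter fun p => p.1 = a ∨ p.2 = a).card = 1 ∧
        (G.arcs.filter fun p => p.1 = b ∨ p.2 = b).card = 1

/-- The edges of the undirected component `c` of `G`. -/
def compEdges (G : MixedGraph V) (c : G.edgeGraph.ConnectedComponent) :
    Set (Sym2 V) := {e | e ∈ G.edges ∧ ∀ v ∈ e, v ∈ c.supp}

end MixedGraph

/-- `o` chooses exactly one direction for each edge in `E'`, and relates nothing else.
Orientations of a mixed graph `G` correspond to choices `o` with
`OrientsEdges ↑G.edges o`, the orientation being the digraph `G.dig o`. -/
def OrientsEdges (E' : Set (Sym2 V)) (o : V → V → Prop) : Prop :=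
  (∀ u v, o u v → s(u, v) ∈ E') ∧ (∀ u v, s(u, v) ∈ E' → (o u v ↔ ¬ o v u))

/-- The orientation of the undirected component `c` inherited from the
edge-orientation `o`. -/
def inheritO (G : MixedGraph V) (c : G.edgeGraph.ConnectedComponent)
    (o : V → V → Prop) : V → V → Prop :=
  fun u v => o u v ∧ u ∈ c.supp ∧ v ∈ c.supp

/-- The edge-orientation obtained from `o` by reorienting the edges of the
undirected component `c` according to `oT` (this is `D⟨T'⟩`). -/
def replaceO (G : MixedGraph V) (c : G.edgeGraph.ConnectedComponent)
    (o oT : V → V → Prop) : V → V → Prop :=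
  fun u v => (o u v ∧ (u ∉ c.supp ∨ v ∉ c.supp)) ∨ oT u v

/-- `𝒯` is an optimal replacement set for `((G, w), T)` where `T` is the undirected
component `c`. -/
def IsOptReplacementSet [Fintype V] [DecidableEq V] (G : MixedGraph V) (w : V → ℕ)
    (c : G.edgeGraph.ConnectedComponent) (𝒯 : Set (V → V → Prop)) : Prop :=
  (∀ oT ∈ 𝒯, OrientsEdges (G.compEdges c) oT) ∧
    ∀ o, OrientsEdges (G.edges : Set (Sym2 V)) o →
      ∃ oT ∈ 𝒯, Rw (G.dig o) w ≤ Rw (G.dig (replaceO G c o oT)) w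

/-- `𝒯` is a `δ`-optimal replacement set for `((G, w), T)` where `T` is the
undirected component `c`. -/
def IsApproxReplacementSet [Fintype V] [DecidableEq V] (G : MixedGraph V) (w : V → ℕ)
    (c : G.edgeGraph.ConnectedComponent) (δ : ℝ) (𝒯 : Set (V → V → Prop)) : Prop :=
  (∀ oT ∈ 𝒯, OrientsEdges (G.compEdges c) oT) ∧
    ∀ o, OrientsEdges (G.edges : Set (Sym2 V)) o →
      ∃ oT ∈ 𝒯, (Rw (G.dig o) w : ℝ) - δ * (∑ v, (w v : ℝ)) ^ 2
        ≤ (Rw (G.dig (replaceO G c o oT)) w : ℝ)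


open SimpleGraph

def fromPairs (F : Finset (V × V)) : SimpleGraph V where
  Adj u v := u ≠ v ∧ ((u, v) ∈ F ∨ (v, u) ∈ F)
  symm := by constructor; rintro u v ⟨h, h2⟩; exact ⟨h.symm, h2.symm⟩
  loopless := ⟨fun v h => h.1 rfl⟩

lemma reach_sup_edge {H : SimpleGraph V} {a b x y : V}
    (h : (H ⊔ fromPairs {(a, b)}).Reachable x y) :
    H.Reachable x y ∨ (H.Reachable x a ∧ H.Reachable b y) ∨
      (H.Reachable x b ∧ H.Reachable a y) := by
  obtain ⟨p⟩ := h
  induction p with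
  | nil => exact Or.inl (Reachable.refl _)
  | @cons x z y h p ih =>
    cases h with
    | inl h =>
      have hxz : H.Reachable x z := h.reachable
      rcases ih with h1 | ⟨h1, h2⟩ | ⟨h1, h2⟩
      · exact Or.inl (hxz.trans h1)
      · exact Or.inr (Or.inl ⟨hxz.trans h1, h2⟩)
      · exact Or.inr (Or.inr ⟨hxz.trans h1, h2⟩)
    | inr h =>
      obtain ⟨hne, h | h⟩ := h
      · simp only [Finset.mem_singleton, Prod.mk.injEq] at h
        obtain ⟨rfl, rfl⟩ := h
        rcases ih with h1 | ⟨h1, h2⟩ | ⟨h1, h2⟩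
        · exact Or.inr (Or.inl ⟨Reachable.refl _, h1⟩)
        · exact Or.inr (Or.inr ⟨h1.symm, h1.symm.trans h2⟩)
        · exact Or.inl h2
      · simp only [Finset.mem_singleton, Prod.mk.injEq] at h
        obtain ⟨rfl, rfl⟩ := h
        rcases ih with h1 | ⟨h1, h2⟩ | ⟨h1, h2⟩
        · exact Or.inr (Or.inr ⟨Reachable.refl _, h1⟩)
        · exact Or.inl h2
        · exact Or.inr (Or.inl ⟨h1.symm, h1.symm.trans h2⟩)

lemma card_comp_le_of_connected [Finite V] (F : Finset (V × V)) (H : SimpleGraph V)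
    (hc : (H ⊔ fromPairs F).Connected) :
    Nat.card H.ConnectedComponent ≤ F.card + 1 := by
  classical
  induction F using Finset.induction generalizing H with
  | empty =>
    have he : (H ⊔ fromPairs (∅ : Finset (V × V))) = H := by
      ext u v; simp [fromPairs]
    rw [he] at hc
    have : Subsingleton H.ConnectedComponent :=
      ⟨by rintro ⟨u⟩ ⟨v⟩; exact ConnectedComponent.sound (hc.preconnected u v)⟩
    haveI hf : Finite H.ConnectedComponent := Quot.finite _
    exact le_trans (Finite.card_le_one_iff_subsingleton.mpr this) (by omega)
  | @insert p s hp ih =>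
    obtain ⟨a, b⟩ := p
    set H' := H ⊔ fromPairs {(a, b)} with hH'
    have he : H ⊔ fromPairs (insert (a, b) s) = H' ⊔ fromPairs s := by
      ext u v
      simp only [hH', sup_adj, fromPairs, Finset.mem_insert, Finset.mem_singleton, Prod.mk.injEq]
      tauto
    rw [he] at hc
    have h1 : Nat.card H'.ConnectedComponent ≤ s.card + 1 := ih H' hc
    have h2 : Nat.card H.ConnectedComponent ≤ Nat.card H'.ConnectedComponent + 1 := by
      haveI : Finite H'.ConnectedComponent := Quot.finite _
      have φdef : ∀ x : V, (ConnectedComponent.map (Hom.ofLE (le_sup_left : H ≤ H'))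
          (H.connectedComponentMk x)) = H'.connectedComponentMk x := fun x => rfl
      set φ := ConnectedComponent.map (Hom.ofLE (le_sup_left : H ≤ H'))
      have key : Function.Injective (fun c : H.ConnectedComponent =>
          if c = H.connectedComponentMk b then Sum.inr () else
            (Sum.inl (φ c) : H'.ConnectedComponent ⊕ Unit)) := by
        intro c c' hcc
        simp only at hcc
        by_cases e1 : c = H.connectedComponentMk b <;> by_cases e2 : c' = H.connectedComponentMk b
        · exact e1.trans e2.symm
        · rw [if_pos e1, if_neg e2] at hcc; exact absurd hcc (by simp)
        · rw [if_neg e1, if_pos e2] at hcc; exact absurd hcc (by simp)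
        · rw [if_neg e1, if_neg e2] at hcc
          simp only [Sum.inl.injEq] at hcc
          obtain ⟨x, rfl⟩ := c.exists_rep
          obtain ⟨y, rfl⟩ := c'.exists_rep
          have hcc' : H'.connectedComponentMk x = H'.connectedComponentMk y := hcc
          have hr : H'.Reachable x y := ConnectedComponent.exact hcc'
          rcases reach_sup_edge hr with h | ⟨hxa, hby⟩ | ⟨hxb, hay⟩
          · exact ConnectedComponent.sound h
          · exact absurd (ConnectedComponent.sound hby.symm) e2
          · exact absurd (ConnectedComponent.sound hxb) e1
      calc Nat.card H.ConnectedComponent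
          ≤ Nat.card (H'.ConnectedComponent ⊕ Unit) := Nat.card_le_card_of_injective _ key
        _ = Nat.card H'.ConnectedComponent + 1 := by simp [Nat.card_sum]
    rw [Finset.card_insert_of_notMem hp]
    omega

/-! ### Tree lemmas -/

/-- `T` with vertex `r` deleted (kept as isolated vertex). -/
def delV (T : SimpleGraph V) (r : V) : SimpleGraph V where
  Adj u v := T.Adj u v ∧ u ≠ r ∧ v ≠ r
  symm := by constructor; rintro u v ⟨h, h1, h2⟩; exact ⟨h.symm, h2, h1⟩
  loopless := ⟨fun v h => T.loopless.irrefl v h.1⟩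

lemma delV_le {T : SimpleGraph V} {r : V} : delV T r ≤ T := fun _ _ h => h.1

lemma dist_tri {T : SimpleGraph V} {u v x : V} (h1 : T.Reachable u v) (h2 : T.Reachable v x) :
    T.dist u x ≤ T.dist u v + T.dist v x := by
  obtain ⟨p, hp⟩ := h1.exists_walk_length_eq_dist
  obtain ⟨q, hq⟩ := h2.exists_walk_length_eq_dist
  calc T.dist u x ≤ (p.append q).length := SimpleGraph.dist_le _
    _ = _ := by rw [SimpleGraph.Walk.length_append, hp, hq]

lemma adj_dist_one {T : SimpleGraph V} {u v : V} (h : T.Adj u v) : T.dist u v = 1 :=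
  SimpleGraph.dist_eq_one_iff_adj.mpr h

lemma exists_nbr_of_walk {T : SimpleGraph V} {r x : V} (p : T.Walk x r) (hx : x ≠ r) :
    ∃ u, T.Adj u r ∧ (delV T r).Reachable x u ∧ ∃ q : T.Walk x u, q.length + 1 ≤ p.length := by
  induction p with
  | nil => exact absurd rfl hx
  | @cons x z r h p ih =>
    by_cases hz : z = r
    · subst hz
      exact ⟨x, h, SimpleGraph.Reachable.refl _, SimpleGraph.Walk.nil, by simp⟩
    · obtain ⟨u, hu, hr, q, hq⟩ := ih hz
      refine ⟨u, hu, (SimpleGraph.Adj.reachable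
        (show (delV T r).Adj x z from ⟨h, hx, hz⟩)).trans hr,
        SimpleGraph.Walk.cons h q, ?_⟩
      simp only [SimpleGraph.Walk.length_cons]
      omega

lemma reach_del_of_walk {T : SimpleGraph V} {r x y : V} (p : T.Walk x y)
    (hr : r ∉ p.support) : (delV T r).Reachable x y := by
  induction p with
  | nil => exact SimpleGraph.Reachable.refl _
  | @cons x z y h p ih =>
    simp only [SimpleGraph.Walk.support_cons, List.mem_cons] at hr
    push_neg at hr
    have hz : z ≠ r := by
      intro hzr
      exact hr.2 (hzr ▸ p.start_mem_support)
    exact (SimpleGraph.Adj.reachable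
      (show (delV T r).Adj x z from ⟨h, fun hxr => hr.1 hxr.symm, hz⟩)).trans (ih hr.2)

lemma delV_support_ne {T : SimpleGraph V} {r x y : V} (p : (delV T r).Walk x y)
    (hx : x ≠ r) : ∀ v ∈ p.support, v ≠ r := by
  induction p with
  | nil => intro v hv; simp at hv; exact hv ▸ hx
  | @cons x z y h p ih =>
    intro v hv
    simp only [SimpleGraph.Walk.support_cons, List.mem_cons] at hv
    rcases hv with rfl | hv
    · exact hx
    · exact ih h.2.2 v hv

lemma nbr_unique {T : SimpleGraph V} (hT : T.IsAcyclic) {r u u' : V}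
    (hu : T.Adj u r) (hu' : T.Adj u' r) (h : (delV T r).Reachable u u') : u = u' := by
  classical
  by_contra hne
  obtain ⟨p0⟩ := h
  let P := p0.toPath
  have hPsupp : ∀ v ∈ (P : (delV T r).Walk u u').support, v ≠ r :=
    delV_support_ne _ (fun huu => hu.ne huu)
  have hedges : ∀ e ∈ (P : (delV T r).Walk u u').edges, e ∈ T.edgeSet := fun e he =>
    SimpleGraph.edgeSet_mono delV_le ((P : (delV T r).Walk u u').edges_subset_edgeSet he)
  let q : T.Walk u u' := (P : (delV T r).Walk u u').transfer T hedges
  have hq : q.IsPath := P.2.transfer _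
  have hqsupp : r ∉ q.reverse.support := by
    rw [SimpleGraph.Walk.support_reverse, List.mem_reverse]
    intro hmem
    rw [SimpleGraph.Walk.support_transfer] at hmem
    exact hPsupp r hmem rfl
  have hpath2 : (SimpleGraph.Walk.cons hu'.symm q.reverse).IsPath := by
    rw [SimpleGraph.Walk.cons_isPath_iff]
    exact ⟨hq.reverse, hqsupp⟩
  have hpath1 : (SimpleGraph.Walk.cons hu.symm SimpleGraph.Walk.nil).IsPath := by
    simp [SimpleGraph.Walk.cons_isPath_iff, hu.ne']
  have := SimpleGraph.isAcyclic_iff_path_unique.mp hT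
    ⟨SimpleGraph.Walk.cons hu.symm SimpleGraph.Walk.nil, hpath1⟩ ⟨_, hpath2⟩
  have hlen := congrArg (fun p : T.Path r u => (p : T.Walk r u).length) this
  simp only [SimpleGraph.Walk.length_cons, SimpleGraph.Walk.length_nil,
    SimpleGraph.Walk.length_reverse] at hlen
  have : q.length = 0 := by omega
  exact hne (SimpleGraph.Walk.eq_of_length_eq_zero this)

lemma exists_canonical_nbr {T : SimpleGraph V} {r v : V} (hreach : T.Reachable v r)
    (hv : v ≠ r) :
    ∃ u, T.Adj u r ∧ (delV T r).Reachable v u ∧ T.dist v u + 1 = T.dist v r := by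
  obtain ⟨p, hp⟩ := hreach.exists_walk_length_eq_dist
  obtain ⟨u, hadj, hr, q, hq⟩ := exists_nbr_of_walk p hv
  refine ⟨u, hadj, hr, ?_⟩
  have h1 : T.dist v u ≤ q.length := SimpleGraph.dist_le q
  have h2 : T.dist v r ≤ T.dist v u + 1 := by
    calc T.dist v r ≤ T.dist v u + T.dist u r := dist_tri (hr.mono delV_le) hadj.reachable
      _ ≤ T.dist v u + 1 := by rw [adj_dist_one hadj]
  omega

lemma same_side_dist {T : SimpleGraph V} (hT : T.IsAcyclic) {r u v : V}
    (hu : T.Adj u r) (hvu : (delV T r).Reachable v u) (hv : v ≠ r) :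
    T.dist v u + 1 = T.dist v r := by
  have hreach : T.Reachable v r := (hvu.mono delV_le).trans hu.reachable
  obtain ⟨u', hu', hru', hd⟩ := exists_canonical_nbr hreach hv
  have : u' = u := nbr_unique hT hu' hu (hru'.symm.trans hvu)
  exact this ▸ hd

lemma other_side_dist {T : SimpleGraph V} {r u v : V}
    (hu : T.Adj u r) (hvu : ¬ (delV T r).Reachable v u) (hreach : T.Reachable v r)
    (hvr : v ≠ r) : T.dist v u = T.dist v r + 1 := by
  classical
  have hur : u ≠ r := hu.ne
  have hvur : T.Reachable v u := hreach.trans hu.reachable.symm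
  have hle : T.dist v u ≤ T.dist v r + 1 := by
    calc T.dist v u ≤ T.dist v r + T.dist r u := dist_tri hreach hu.reachable.symm
      _ = T.dist v r + 1 := by rw [adj_dist_one hu.symm]
  have hge : T.dist v r + 1 ≤ T.dist v u := by
    obtain ⟨p, hp⟩ := hvur.exists_walk_length_eq_dist
    by_cases hrs : r ∈ p.support
    · have hsplit := congrArg SimpleGraph.Walk.length (p.take_spec hrs)
      rw [SimpleGraph.Walk.length_append] at hsplit
      have h1 : T.dist v r ≤ (p.takeUntil r hrs).length := SimpleGraph.dist_le _
      have h2 : 1 ≤ (p.dropUntil r hrs).length := by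
        rcases Nat.eq_zero_or_pos (p.dropUntil r hrs).length with h0 | h0
        · exact absurd (SimpleGraph.Walk.eq_of_length_eq_zero h0) (Ne.symm hur)
        · exact h0
      omega
    · exact absurd (reach_del_of_walk p hrs) hvu
  omega

/-! ### Centroid -/

lemma centroid [Fintype V] (T : SimpleGraph V) (hT : T.IsAcyclic) (w : V → ℕ)
    (c₀ : T.ConnectedComponent) :
    ∃ r, T.connectedComponentMk r = c₀ ∧ ∀ v, T.connectedComponentMk v = c₀ → v ≠ r →
      ∀ S Sb : Finset V, (∀ x, x ∈ S ↔ T.connectedComponentMk x = c₀) →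
        (∀ x, x ∈ Sb ↔ (x ∈ S ∧ x ≠ r ∧
          (delV T r).connectedComponentMk x = (delV T r).connectedComponentMk v)) →
        2 * ∑ x ∈ Sb, w x ≤ ∑ x ∈ S, w x := by
  classical
  set S0 := Finset.univ.filter (fun x => T.connectedComponentMk x = c₀) with hS0
  have hS0ne : S0.Nonempty := by
    obtain ⟨x, hx⟩ := c₀.exists_rep
    refine ⟨x, by simp only [hS0, Finset.mem_filter, Finset.mem_univ, true_and]; exact hx⟩
  obtain ⟨r, hrS, hrmin⟩ := S0.exists_min_image (fun x => ∑ v ∈ S0, w v * T.dist v x) hS0ne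
  have hrc : T.connectedComponentMk r = c₀ := by
    simpa only [hS0, Finset.mem_filter, Finset.mem_univ, true_and] using hrS
  refine ⟨r, hrc, ?_⟩
  intro v hvc hvr S Sb hSmem hSbmem
  have hSeq : S = S0 := by
    ext x; simp only [hS0, Finset.mem_filter, Finset.mem_univ, true_and, hSmem]
  have hrS' : r ∈ S := by rw [hSeq]; exact hrS
  have hrmin' : ∀ x' ∈ S, (∑ x ∈ S, w x * T.dist x r) ≤ ∑ x ∈ S, w x * T.dist x x' := by
    simpa only [hSeq] using hrmin
  by_contra hcon
  push_neg at hcon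
  have hreach : T.Reachable v r := SimpleGraph.ConnectedComponent.eq.mp (hvc.trans hrc.symm)
  obtain ⟨u, huadj, hvu, _⟩ := exists_canonical_nbr hreach hvr
  have huS : u ∈ S := by
    rw [hSmem, ← hrc]
    exact SimpleGraph.ConnectedComponent.sound huadj.reachable
  set mk2 := (delV T r).connectedComponentMk with hmk2
  have hSbsub : Sb ⊆ S.erase r := by
    intro x hx
    rw [hSbmem] at hx
    exact Finset.mem_erase.mpr ⟨hx.2.1, hx.1⟩
  set So := (S.erase r) \ Sb with hSo
  -- distances
  have hb : ∀ x ∈ Sb, T.dist x u + 1 = T.dist x r := by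
    intro x hx
    rw [hSbmem] at hx
    have hxu : (delV T r).Reachable x u :=
      (SimpleGraph.ConnectedComponent.eq.mp hx.2.2).trans hvu
    exact same_side_dist hT huadj hxu hx.2.1
  have ho : ∀ x ∈ So, T.dist x u = T.dist x r + 1 := by
    intro x hx
    simp only [hSo, Finset.mem_sdiff, Finset.mem_erase] at hx
    have hxS : T.connectedComponentMk x = c₀ := (hSmem x).mp hx.1.2
    have hxreach : T.Reachable x r := SimpleGraph.ConnectedComponent.eq.mp (hxS.trans hrc.symm)
    have hxu : ¬ (delV T r).Reachable x u := by
      intro hre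
      exact hx.2 ((hSbmem x).mpr ⟨hx.1.2, hx.1.1,
        SimpleGraph.ConnectedComponent.sound (hre.trans hvu.symm)⟩)
    exact other_side_dist huadj hxu hxreach hx.1.1
  -- sum identity
  have hsplit : ∀ g : V → ℕ, ∑ x ∈ S, g x = g r + (∑ x ∈ So, g x + ∑ x ∈ Sb, g x) := by
    intro g
    rw [hSo, Finset.sum_sdiff hSbsub, Finset.add_sum_erase _ _ hrS']
  have hkey : (∑ x ∈ S, w x * T.dist x u) + 2 * ∑ x ∈ Sb, w x
      = (∑ x ∈ S, w x * T.dist x r) + ∑ x ∈ S, w x := by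
    rw [hsplit (fun x => w x * T.dist x u), hsplit (fun x => w x * T.dist x r), hsplit w]
    have e1 : ∑ x ∈ Sb, w x * T.dist x u + ∑ x ∈ Sb, w x = ∑ x ∈ Sb, w x * T.dist x r := by
      rw [← Finset.sum_add_distrib]
      refine Finset.sum_congr rfl fun x hx => ?_
      rw [← hb x hx]; ring
    have e2 : ∑ x ∈ So, w x * T.dist x u = ∑ x ∈ So, w x * T.dist x r + ∑ x ∈ So, w x := by
      rw [← Finset.sum_add_distrib]
      refine Finset.sum_congr rfl fun x hx => ?_
      rw [ho x hx]; ring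
    have e3 : T.dist r u = 1 := adj_dist_one huadj.symm
    have e4 : T.dist r r = 0 := by simp
    rw [e3, e4]
    omega
  exact absurd (hrmin' u huS) (by omega)

/-! ### Greedy selection and arithmetic -/

lemma greedy_subset {ι : Type*} [DecidableEq ι] (s : Finset ι) (f : ι → ℕ)
    (hsmall : ∀ i ∈ s, 4 * f i ≤ ∑ j ∈ s, f j) :
    ∃ t ⊆ s, (∑ j ∈ s, f j) ≤ 2 * ∑ j ∈ t, f j ∧ 4 * ∑ j ∈ t, f j ≤ 3 * ∑ j ∈ s, f j := by
  classical
  set Sg := ∑ j ∈ s, f j with hSg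
  have hP : (s.powerset.filter (fun t => Sg ≤ 2 * ∑ j ∈ t, f j)).Nonempty :=
    ⟨s, by simp [Finset.mem_powerset]; omega⟩
  obtain ⟨t, ht, htmin⟩ := Finset.exists_min_image _ (fun t => t.card) hP
  simp only [Finset.mem_filter, Finset.mem_powerset] at ht
  refine ⟨t, ht.1, ht.2, ?_⟩
  rcases Finset.eq_empty_or_nonempty t with rfl | ⟨i, hi⟩
  · simp only [Finset.sum_empty, Nat.mul_zero] at ht ⊢
    omega
  · have hterase : t.erase i ∉ s.powerset.filter (fun t => Sg ≤ 2 * ∑ j ∈ t, f j) := by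
      intro hmem
      have := htmin _ hmem
      have hcard : (t.erase i).card < t.card := Finset.card_erase_lt_of_mem hi
      omega
    have hlt : 2 * ∑ j ∈ t.erase i, f j < Sg := by
      by_contra hge
      exact hterase (Finset.mem_filter.mpr
        ⟨Finset.mem_powerset.mpr ((Finset.erase_subset _ _).trans ht.1), by omega⟩)
    have hsum : ∑ j ∈ t, f j = f i + ∑ j ∈ t.erase i, f j :=
      (Finset.add_sum_erase _ _ hi).symm
    have hfi : 4 * f i ≤ Sg := hsmall i (ht.1 hi)
    omega

lemma two_mul_choose_two (n : ℕ) : 2 * Nat.choose n 2 = n * (n - 1) := by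
  induction n with
  | zero => rfl
  | succ m ih =>
    rw [Nat.choose_succ_succ, Nat.mul_add, ih, Nat.choose_one_right]
    rcases m with _ | m'
    · rfl
    · simp only [Nat.succ_sub_one]
      ring

lemma final_arith (a b c Sg M D : ℕ) (hab : a + b = Sg) (hM : M = Sg + c) (h8 : 8 ≤ M)
    (ha : Sg ≤ 4 * a) (hb : Sg ≤ 4 * b + 2 * c) (hD : 2 * D = c * (c - 1)) :
    M ^ 2 ≤ 49 * (2 * D + (a * c + c * b + a * b)) := by
  rcases Nat.eq_zero_or_pos c with rfl | hc
  · have hD0 : D = 0 := by omega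
    subst hD0
    zify at *
    nlinarith [mul_nonneg (sub_nonneg.mpr ha) (sub_nonneg.mpr hb)]
  · have hD' : 2 * D + c = c * c := by
      have h1 : c - 1 + 1 = c := by omega
      nlinarith [hD, h1]
    zify at *
    nlinarith [mul_nonneg (sub_nonneg.mpr ha) (sub_nonneg.mpr hb),
      sq_nonneg ((c : ℤ) - 1), sq_nonneg ((c : ℤ) - 2), hc]

lemma exists_step {T : SimpleGraph V} {v r : V} (h : T.Reachable v r) (hne : v ≠ r) :
    ∃ z, T.Adj v z ∧ T.dist z r + 1 = T.dist v r := by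
  obtain ⟨p, hp⟩ := h.exists_walk_length_eq_dist
  have hd1 : 1 ≤ T.dist v r := h.pos_dist_of_ne hne
  cases p with
  | nil => exact absurd rfl hne
  | @cons _ z _ hadj q =>
    refine ⟨z, hadj, ?_⟩
    simp only [SimpleGraph.Walk.length_cons] at hp
    have h1 : T.dist z r ≤ q.length := SimpleGraph.dist_le q
    have h2 : T.dist v r ≤ 1 + T.dist z r := by
      obtain ⟨q', hq'⟩ := (SimpleGraph.Reachable.exists_walk_length_eq_dist ⟨q⟩)
      calc T.dist v r ≤ (SimpleGraph.Walk.cons hadj q').length := SimpleGraph.dist_le _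
        _ = 1 + T.dist z r := by simp [hq', Nat.add_comm]
    omega

section Orient

variable (G : MixedGraph V) (r : V) (A : Finset V) (g : V → ℤ) (idx : V → ℕ)

lemma orients_potential (hidx : Function.Injective idx) :
    OrientsEdges (G.edges : Set (Sym2 V)) (fun u v => s(u, v) ∈ G.edges ∧
      (g v < g u ∨ (g u = g v ∧ idx u < idx v))) := by
  constructor
  · exact fun u v h => h.1
  · intro u v he
    simp only [Finset.coe_sort_coe, Finset.mem_coe] at he
    have hne : u ≠ v := by
      intro h
      exact G.edges_not_diag _ he (by rw [h]; exact Sym2.mk_isDiag_iff.mpr rfl)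
    have hidxne : idx u ≠ idx v := fun h => hne (hidx h)
    have hswap : s(v, u) ∈ G.edges := by rwa [Sym2.eq_swap]
    simp only [he, hswap, true_and]
    omega

lemma reach_A_aux (hgr : g r = 0)
    (hAprop : ∀ v ∈ A, v ≠ r ∧ G.edgeGraph.Reachable v r ∧
      g v = (G.edgeGraph.dist v r : ℤ))
    (hclosed : ∀ v ∈ A, ∀ z, G.edgeGraph.Adj v z → z ≠ r →
      (delV G.edgeGraph r).Reachable z v → z ∈ A) :
    ∀ v ∈ A, Relation.ReflTransGen (G.dig (fun u v => s(u, v) ∈ G.edges ∧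
      (g v < g u ∨ (g u = g v ∧ idx u < idx v)))) v r := by
  suffices h : ∀ d v, v ∈ A → G.edgeGraph.dist v r = d →
      Relation.ReflTransGen (G.dig (fun u v => s(u, v) ∈ G.edges ∧
        (g v < g u ∨ (g u = g v ∧ idx u < idx v)))) v r by
    exact fun v hv => h _ v hv rfl
  intro d
  induction d using Nat.strong_induction_on with
  | _ d ih =>
    intro v hv hd
    obtain ⟨hvr, hreach, hgv⟩ := hAprop v hv
    have hdpos : 1 ≤ d := hd ▸ hreach.pos_dist_of_ne hvr
    obtain ⟨z, hadj, hz⟩ := exists_step hreach hvr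
    by_cases hzr : z = r
    · subst hzr
      refine Relation.ReflTransGen.single (Or.inr ?_)
      refine ⟨hadj, Or.inl ?_⟩
      rw [hgr, hgv]
      have h1' := hreach.pos_dist_of_ne hvr
      omega
    · have hzA : z ∈ A := hclosed v hv z hadj hzr
        (SimpleGraph.Adj.reachable (show (delV G.edgeGraph r).Adj z v from
          ⟨hadj.symm, hzr, hvr⟩))
      obtain ⟨hzr', hzreach, hgz⟩ := hAprop z hzA
      have hstep : (G.dig (fun u v => s(u, v) ∈ G.edges ∧
          (g v < g u ∨ (g u = g v ∧ idx u < idx v)))) v z := by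
        refine Or.inr ⟨hadj, Or.inl ?_⟩
        rw [hgv, hgz]
        omega
      exact Relation.ReflTransGen.head hstep
        (ih (G.edgeGraph.dist z r) (by omega) z hzA rfl)

lemma reach_B_aux (hgr : g r = 0)
    (hAprop : ∀ v ∈ A, v ≠ r ∧ G.edgeGraph.Reachable v r ∧
      g v = -(G.edgeGraph.dist v r : ℤ))
    (hclosed : ∀ v ∈ A, ∀ z, G.edgeGraph.Adj v z → z ≠ r →
      (delV G.edgeGraph r).Reachable z v → z ∈ A) :
    ∀ v ∈ A, Relation.ReflTransGen (G.dig (fun u v => s(u, v) ∈ G.edges ∧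
      (g v < g u ∨ (g u = g v ∧ idx u < idx v)))) r v := by
  suffices h : ∀ d v, v ∈ A → G.edgeGraph.dist v r = d →
      Relation.ReflTransGen (G.dig (fun u v => s(u, v) ∈ G.edges ∧
        (g v < g u ∨ (g u = g v ∧ idx u < idx v)))) r v by
    exact fun v hv => h _ v hv rfl
  intro d
  induction d using Nat.strong_induction_on with
  | _ d ih =>
    intro v hv hd
    obtain ⟨hvr, hreach, hgv⟩ := hAprop v hv
    have hdpos : 1 ≤ d := hd ▸ hreach.pos_dist_of_ne hvr
    obtain ⟨z, hadj, hz⟩ := exists_step hreach hvr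
    have hedge : s(z, v) ∈ G.edges := by
      rw [Sym2.eq_swap]; exact hadj
    by_cases hzr : z = r
    · subst hzr
      refine Relation.ReflTransGen.single (Or.inr ?_)
      refine ⟨hedge, Or.inl ?_⟩
      rw [hgr, hgv]
      have h1' := hreach.pos_dist_of_ne hvr
      omega
    · have hzA : z ∈ A := hclosed v hv z hadj hzr
        (SimpleGraph.Adj.reachable (show (delV G.edgeGraph r).Adj z v from
          ⟨hadj.symm, hzr, hvr⟩))
      obtain ⟨hzr', hzreach, hgz⟩ := hAprop z hzA
      have hstep : (G.dig (fun u v => s(u, v) ∈ G.edges ∧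
          (g v < g u ∨ (g u = g v ∧ idx u < idx v)))) z v := by
        refine Or.inr ⟨hedge, Or.inl ?_⟩
        rw [hgv, hgz]
        omega
      exact Relation.ReflTransGen.tail
        (ih (G.edgeGraph.dist z r) (by omega) z hzA rfl) hstep

end Orient

lemma Rw_lower [Fintype V] [DecidableEq V] (D : V → V → Prop) (w : V → ℕ) (r : V)
    (A B : Finset V) (hrA : r ∉ A) (hrB : r ∉ B) (hAB : ∀ x ∈ A, x ∉ B)
    (hA : ∀ v ∈ A, Relation.ReflTransGen D v r)
    (hB : ∀ v ∈ B, Relation.ReflTransGen D r v) :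
    2 * Nat.choose (w r) 2 + ((∑ v ∈ A, w v) * w r + w r * (∑ v ∈ B, w v)
      + (∑ v ∈ A, w v) * (∑ v ∈ B, w v)) ≤ Rw D w := by
  classical
  have h1 : 2 * Nat.choose (w r) 2 ≤ 2 * ∑ v, Nat.choose (w v) 2 :=
    Nat.mul_le_mul_left 2 (Finset.single_le_sum (f := fun v => Nat.choose (w v) 2)
      (fun i _ => Nat.zero_le _) (Finset.mem_univ r))
  set P1 : Finset (V × V) := A ×ˢ {r} with hP1
  set P2 : Finset (V × V) := {r} ×ˢ B with hP2
  set P3 : Finset (V × V) := A ×ˢ B with hP3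
  have hd12 : Disjoint P1 P2 := by
    rw [Finset.disjoint_left]
    rintro ⟨x, y⟩ hx hy
    simp only [hP1, hP2, Finset.mem_product, Finset.mem_singleton] at hx hy
    exact hrA (hy.1 ▸ hx.1)
  have hd13 : Disjoint P1 P3 := by
    rw [Finset.disjoint_left]
    rintro ⟨x, y⟩ hx hy
    simp only [hP1, hP3, Finset.mem_product, Finset.mem_singleton] at hx hy
    exact hrB (hx.2 ▸ hy.2)
  have hd23 : Disjoint P2 P3 := by
    rw [Finset.disjoint_left]
    rintro ⟨x, y⟩ hx hy
    simp only [hP2, hP3, Finset.mem_product, Finset.mem_singleton] at hx hy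
    exact hrA (hx.1 ▸ hy.1)
  have hsub : P1 ∪ P2 ∪ P3 ⊆ Finset.univ.offDiag := by
    rintro ⟨x, y⟩ hxy
    simp only [Finset.mem_union, hP1, hP2, hP3, Finset.mem_product,
      Finset.mem_singleton] at hxy
    rw [Finset.mem_offDiag]
    refine ⟨Finset.mem_univ _, Finset.mem_univ _, ?_⟩
    intro heq0
    have heq : x = y := heq0
    rcases hxy with (⟨hx, hy⟩ | ⟨hx, hy⟩) | ⟨hx, hy⟩
    · rw [heq, hy] at hx; exact hrA hx
    · rw [← heq, hx] at hy; exact hrB hy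
    · rw [heq] at hx; exact hAB y hx hy
  have h2 : ∑ p ∈ P1 ∪ P2 ∪ P3, w p.1 * w p.2 * kappa D p.1 p.2
      ≤ ∑ p ∈ Finset.univ.offDiag, w p.1 * w p.2 * kappa D p.1 p.2 :=
    Finset.sum_le_sum_of_subset hsub
  have e0 : ∑ p ∈ P1 ∪ P2 ∪ P3, w p.1 * w p.2 * kappa D p.1 p.2
      = (∑ p ∈ P1, w p.1 * w p.2 * kappa D p.1 p.2)
      + (∑ p ∈ P2, w p.1 * w p.2 * kappa D p.1 p.2)
      + (∑ p ∈ P3, w p.1 * w p.2 * kappa D p.1 p.2) := by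
    rw [Finset.sum_union (Finset.disjoint_union_left.mpr ⟨hd13, hd23⟩),
      Finset.sum_union hd12]
  have e1 : ∑ p ∈ P1, w p.1 * w p.2 * kappa D p.1 p.2 = (∑ v ∈ A, w v) * w r := by
    rw [hP1, Finset.sum_product, Finset.sum_mul]
    refine Finset.sum_congr rfl fun v hv => ?_
    rw [Finset.sum_singleton, kappa, if_pos (hA v hv), Nat.mul_one]
  have e2 : ∑ p ∈ P2, w p.1 * w p.2 * kappa D p.1 p.2 = w r * (∑ v ∈ B, w v) := by
    rw [hP2, Finset.sum_product, Finset.sum_singleton, Finset.mul_sum]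
    refine Finset.sum_congr rfl fun v hv => ?_
    rw [kappa, if_pos (hB v hv), Nat.mul_one]
  have e3 : ∑ p ∈ P3, w p.1 * w p.2 * kappa D p.1 p.2
      = (∑ v ∈ A, w v) * (∑ v ∈ B, w v) := by
    rw [hP3, Finset.sum_product, Finset.sum_mul]
    refine Finset.sum_congr rfl fun u hu => ?_
    rw [Finset.mul_sum]
    refine Finset.sum_congr rfl fun v hv => ?_
    rw [kappa, if_pos ((hA u hu).trans (hB v hv)), Nat.mul_one]
  rw [Rw]
  omega

/-- For a mixed graph with connected underlying graph whose undirected edges form a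
forest, with `k = |A| ≥ 1`, admitting an orientation of positive value, there is an
orientation `D` with `196 k² R(D, w) ≥ (∑_v w(v))²`. -/
theorem stmt11 {V : Type*} [Fintype V] [DecidableEq V] (G : MixedGraph V)
    (hconn : G.UG.Connected) (hforest : G.edgeGraph.IsAcyclic)
    (hk : 1 ≤ G.arcs.card) (w : V → ℕ)
    (h1 : ∃ o, OrientsEdges (G.edges : Set (Sym2 V)) o ∧ 1 ≤ Rw (G.dig o) w) :
    ∃ o, OrientsEdges (G.edges : Set (Sym2 V)) o ∧
      (∑ v, w v) ^ 2 ≤ 196 * G.arcs.card ^ 2 * Rw (G.dig o) w := by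
  classical
  obtain ⟨o₁, ho₁, hR₁⟩ := h1
  by_cases hsmall : ∑ v, w v ≤ 14 * G.arcs.card
  · refine ⟨o₁, ho₁, ?_⟩
    have h2 : (∑ v, w v) ^ 2 ≤ 196 * G.arcs.card ^ 2 * 1 := by
      have h3 := Nat.mul_le_mul hsmall hsmall
      nlinarith [h3]
    calc (∑ v, w v) ^ 2 ≤ 196 * G.arcs.card ^ 2 * 1 := h2
      _ ≤ 196 * G.arcs.card ^ 2 * Rw (G.dig o₁) w := Nat.mul_le_mul_left _ hR₁
  push_neg at hsmall
  set k := G.arcs.card with hkdef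
  set T := G.edgeGraph with hTdef
  haveI : Finite T.ConnectedComponent := Quot.finite _
  haveI : Fintype T.ConnectedComponent := Fintype.ofFinite _
  -- component counting
  have hUG : G.UG = T ⊔ fromPairs G.arcs := by
    ext u v
    simp only [MixedGraph.UG, hTdef, MixedGraph.edgeGraph, fromPairs, SimpleGraph.sup_adj]
    constructor
    · rintro (h | h | h)
      · exact Or.inl h
      · exact Or.inr ⟨G.arcs_ne _ h, Or.inl h⟩
      · exact Or.inr ⟨(G.arcs_ne _ h).symm, Or.inr h⟩
    · rintro (h | ⟨hne, h | h⟩)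
      · exact Or.inl h
      · exact Or.inr (Or.inl h)
      · exact Or.inr (Or.inr h)
  have hcount : Nat.card T.ConnectedComponent ≤ k + 1 :=
    card_comp_le_of_connected _ _ (hUG ▸ hconn)
  -- heaviest component
  set cw : T.ConnectedComponent → ℕ :=
    fun c => ∑ x ∈ Finset.univ.filter (fun x => T.connectedComponentMk x = c), w x with hcw
  have hWsum : ∑ c : T.ConnectedComponent, cw c = ∑ v, w v :=
    Finset.sum_fiberwise_of_maps_to (fun x _ => Finset.mem_univ _) w
  have hWpos : 0 < ∑ v, w v := lt_of_le_of_lt (Nat.zero_le _) hsmall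
  have hVne : (Finset.univ : Finset V).Nonempty := by
    rcases Finset.eq_empty_or_nonempty (Finset.univ : Finset V) with h | h
    · rw [h, Finset.sum_empty] at hWpos; omega
    · exact h
  obtain ⟨v₀, -⟩ := hVne
  have hcompne : (Finset.univ : Finset T.ConnectedComponent).Nonempty :=
    ⟨T.connectedComponentMk v₀, Finset.mem_univ _⟩
  obtain ⟨c₀, -, hc₀max⟩ := Finset.exists_max_image Finset.univ cw hcompne
  set M := cw c₀ with hMdef
  have hWM : ∑ v, w v ≤ (k + 1) * M := by
    calc ∑ v, w v = ∑ c : T.ConnectedComponent, cw c := hWsum.symm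
      _ ≤ (Finset.univ : Finset T.ConnectedComponent).card • M :=
        Finset.sum_le_card_nsmul _ _ _ (fun c _ => hc₀max c (Finset.mem_univ c))
      _ = (Finset.univ : Finset T.ConnectedComponent).card * M := smul_eq_mul _ _
      _ ≤ (k + 1) * M := by
        refine Nat.mul_le_mul_right _ ?_
        rw [Finset.card_univ, ← Nat.card_eq_fintype_card]
        exact hcount
  have hM8 : 8 ≤ M := by nlinarith [hk, hsmall, hWM]
  have hWk : ∑ v, w v ≤ 2 * k * M := by nlinarith [hk, hWM, Nat.zero_le M]
  -- centroid
  obtain ⟨r, hrc, hcent⟩ := centroid T hforest w c₀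
  set S : Finset V := Finset.univ.filter (fun x => T.connectedComponentMk x = c₀) with hSdef
  have hSmem : ∀ x, x ∈ S ↔ T.connectedComponentMk x = c₀ := by
    intro x; simp [hSdef]
  have hrS : r ∈ S := (hSmem r).mpr hrc
  have hMS : M = ∑ x ∈ S, w x := rfl
  set Er := S.erase r with hErdef
  set mk2 := (delV T r).connectedComponentMk with hmk2
  set ω : (delV T r).ConnectedComponent → ℕ :=
    fun K => ∑ x ∈ Er.filter (fun x => mk2 x = K), w x with hω
  set img := Er.image mk2 with himg
  set Sg := ∑ x ∈ Er, w x with hSgdef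
  have hMsum : M = Sg + w r := by
    rw [hMS, hSgdef, hErdef, Nat.add_comm, Finset.add_sum_erase _ _ hrS]
  have hωsum : ∑ K ∈ img, ω K = Sg :=
    Finset.sum_fiberwise_of_maps_to (fun x hx => Finset.mem_image_of_mem _ hx) w
  have hcent' : ∀ K ∈ img, 2 * ω K ≤ M := by
    intro K hK
    obtain ⟨v, hv, rfl⟩ := Finset.mem_image.mp hK
    obtain ⟨hvr, hvS⟩ := Finset.mem_erase.mp hv
    have hvc : T.connectedComponentMk v = c₀ := (hSmem v).mp hvS
    refine hcent v hvc hvr S (Er.filter fun x => mk2 x = mk2 v) hSmem ?_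
    intro x
    simp only [Finset.mem_filter, hErdef, Finset.mem_erase]
    tauto
  -- selection of branches
  have hsel : ∃ t ⊆ img, Sg ≤ 4 * (∑ K ∈ t, ω K) ∧
      4 * (∑ K ∈ t, ω K) ≤ 3 * Sg + 2 * w r := by
    by_cases hbig : ∃ K ∈ img, Sg < 4 * ω K
    · obtain ⟨K₀, hK₀, hKbig⟩ := hbig
      have h2M := hcent' K₀ hK₀
      refine ⟨{K₀}, Finset.singleton_subset_iff.mpr hK₀, ?_, ?_⟩
      · rw [Finset.sum_singleton]; omega
      · rw [Finset.sum_singleton]; omega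
    · push_neg at hbig
      obtain ⟨t, hts, h1', h2'⟩ := greedy_subset img ω
        (fun i hi => by rw [hωsum]; exact hbig i hi)
      rw [hωsum] at h1' h2'
      exact ⟨t, hts, by omega, by omega⟩
  obtain ⟨tset, htsub, hta, htb⟩ := hsel
  set A := Er.filter (fun x => mk2 x ∈ tset) with hAdef
  set B := Er.filter (fun x => mk2 x ∉ tset) with hBdef
  set a := ∑ x ∈ A, w x with hadef
  set b := ∑ x ∈ B, w x with hbdef
  have hab : a + b = Sg := Finset.sum_filter_add_sum_filter_not _ _ _
  have haeq : a = ∑ K ∈ tset, ω K :=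
    (Finset.sum_fiberwise_eq_sum_filter Er tset mk2 w).symm
  -- the orientation
  set idx : V → ℕ := fun v => ((Fintype.equivFin V) v : ℕ) with hidxdef
  have hidxinj : Function.Injective idx := fun u v h =>
    (Fintype.equivFin V).injective (Fin.val_injective h)
  set g : V → ℤ := fun x =>
    if x ∈ A then (T.dist x r : ℤ) else if x ∈ B then -(T.dist x r : ℤ) else 0 with hgdef
  have horient : OrientsEdges (G.edges : Set (Sym2 V)) (fun u v => s(u, v) ∈ G.edges ∧
      (g v < g u ∨ (g u = g v ∧ idx u < idx v))) := orients_potential G g idx hidxinj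
  refine ⟨_, horient, ?_⟩
  have hrA : r ∉ A := by
    simp only [hAdef, Finset.mem_filter, hErdef, Finset.mem_erase]
    tauto
  have hrB : r ∉ B := by
    simp only [hBdef, Finset.mem_filter, hErdef, Finset.mem_erase]
    tauto
  have hABdisj : ∀ x ∈ A, x ∉ B := by
    intro x hx hx'
    simp only [hAdef, hBdef, Finset.mem_filter] at hx hx'
    exact hx'.2 hx.2
  have hgr : g r = 0 := by rw [hgdef]; simp [hrA, hrB]
  have hreachS : ∀ v ∈ S, T.Reachable v r :=
    fun v hv => SimpleGraph.ConnectedComponent.eq.mp (((hSmem v).mp hv).trans hrc.symm)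
  have hAprop : ∀ v ∈ A, v ≠ r ∧ T.Reachable v r ∧ g v = (T.dist v r : ℤ) := by
    intro v hv
    have hv' := Finset.mem_filter.mp hv
    obtain ⟨hvr, hvS⟩ := Finset.mem_erase.mp hv'.1
    exact ⟨hvr, hreachS v hvS, by rw [hgdef]; simp [hv]⟩
  have hBprop : ∀ v ∈ B, v ≠ r ∧ T.Reachable v r ∧ g v = -(T.dist v r : ℤ) := by
    intro v hv
    have hv' := Finset.mem_filter.mp hv
    obtain ⟨hvr, hvS⟩ := Finset.mem_erase.mp hv'.1
    refine ⟨hvr, hreachS v hvS, ?_⟩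
    rw [hgdef]
    simp only [if_neg (fun h => hABdisj v h hv), if_pos hv]
  have hclosed : ∀ v z, T.Adj v z → z ≠ r → (delV T r).Reachable z v →
      v ∈ Er → z ∈ Er ∧ mk2 z = mk2 v := by
    intro v z hadj hzr hzv hvEr
    obtain ⟨hvr, hvS⟩ := Finset.mem_erase.mp hvEr
    have hzS : z ∈ S := by
      rw [hSmem]
      rw [← (hSmem v).mp hvS]
      exact SimpleGraph.ConnectedComponent.sound hadj.symm.reachable
    exact ⟨Finset.mem_erase.mpr ⟨hzr, hzS⟩, show mk2 z = mk2 v from SimpleGraph.ConnectedComponent.sound hzv⟩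
  have hAclosed : ∀ v ∈ A, ∀ z, T.Adj v z → z ≠ r → (delV T r).Reachable z v → z ∈ A := by
    intro v hv z hadj hzr hzv
    have hv' := Finset.mem_filter.mp hv
    obtain ⟨hzEr, hmk⟩ := hclosed v z hadj hzr hzv hv'.1
    exact Finset.mem_filter.mpr ⟨hzEr, hmk ▸ hv'.2⟩
  have hBclosed : ∀ v ∈ B, ∀ z, T.Adj v z → z ≠ r → (delV T r).Reachable z v → z ∈ B := by
    intro v hv z hadj hzr hzv
    have hv' := Finset.mem_filter.mp hv
    obtain ⟨hzEr, hmk⟩ := hclosed v z hadj hzr hzv hv'.1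
    exact Finset.mem_filter.mpr ⟨hzEr, hmk ▸ hv'.2⟩
  have hreachA := reach_A_aux G r A g idx hgr hAprop hAclosed
  have hreachB := reach_B_aux G r B g idx hgr hBprop hBclosed
  have hRlow := Rw_lower (G.dig (fun u v => s(u, v) ∈ G.edges ∧
      (g v < g u ∨ (g u = g v ∧ idx u < idx v)))) w r A B hrA hrB hABdisj hreachA hreachB
  have hchoose := two_mul_choose_two (w r)
  have hb2 : Sg ≤ 4 * b + 2 * w r := by
    rw [haeq] at hab
    omega
  have hfinal : M ^ 2 ≤ 49 * (2 * Nat.choose (w r) 2 + (a * w r + w r * b + a * b)) :=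
    final_arith a b (w r) Sg M (Nat.choose (w r) 2) hab hMsum hM8 (haeq ▸ hta) hb2 hchoose
  calc (∑ v, w v) ^ 2 ≤ (2 * k * M) ^ 2 := Nat.pow_le_pow_left hWk 2
    _ = 4 * k ^ 2 * M ^ 2 := by ring
    _ ≤ 4 * k ^ 2 * (49 * Rw (G.dig (fun u v => s(u, v) ∈ G.edges ∧
        (g v < g u ∨ (g u = g v ∧ idx u < idx v)))) w) := by
      refine Nat.mul_le_mul_left _ ?_
      refine le_trans hfinal ?_
      exact Nat.mul_le_mul_left _ hRlow
    _ = 196 * k ^ 2 * Rw (G.dig (fun u v => s(u, v) ∈ G.edges ∧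
        (g v < g u ∨ (g u = g v ∧ idx u < idx v)))) w := by ring
end

section
/- Let G = (V, E, A) be a mixed graph on a finite vertex set with weight function w : V → ℕ, let T₁, …, T_q be the undirected components of G, and for each i ∈ {1,…,q} let 𝒯_i be an optimal replacement set for ((G,w), T_i). Then there exists an orientation D of G that is optimal for (G,w) (i.e. R(D,w) ≥ R(D',w) for every orientation D' of G) and such that for each i ∈ {1,…,q}, the orientation of T_i inherited from D (the digraph on V(T_i) orienting each edge of T_i as in D) belongs to 𝒯_i. -/
open Finset

variable {V : Type*}

section Aux

variable {G : MixedGraph V}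

lemma aux_mem_supp_iff_of_adj (c : G.edgeGraph.ConnectedComponent)
    {u v : V} (h : s(u, v) ∈ G.edges) : u ∈ c.supp ↔ v ∈ c.supp := by
  have hadj : G.edgeGraph.Adj u v := h
  have hr : G.edgeGraph.connectedComponentMk u = G.edgeGraph.connectedComponentMk v :=
    SimpleGraph.ConnectedComponent.sound hadj.reachable
  simp [SimpleGraph.ConnectedComponent.mem_supp_iff, hr]

lemma aux_oT_mem {c : G.edgeGraph.ConnectedComponent} {oT : V → V → Prop}
    (hoT : OrientsEdges (G.compEdges c) oT) {u v : V} (h : oT u v) :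
    s(u, v) ∈ G.edges ∧ u ∈ c.supp ∧ v ∈ c.supp := by
  obtain ⟨he, hall⟩ := hoT.1 u v h
  exact ⟨he, hall u (by simp), hall v (by simp)⟩

lemma aux_supp_disj {c c' : G.edgeGraph.ConnectedComponent} (hne : c' ≠ c)
    {u : V} (hu : u ∈ c'.supp) : u ∉ c.supp := by
  intro hc
  rw [SimpleGraph.ConnectedComponent.mem_supp_iff] at hu hc
  exact hne (hu.symm.trans hc)

lemma aux_replaceO_orients {c : G.edgeGraph.ConnectedComponent} {o oT : V → V → Prop}
    (ho : OrientsEdges (G.edges : Set (Sym2 V)) o)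
    (hoT : OrientsEdges (G.compEdges c) oT) :
    OrientsEdges (G.edges : Set (Sym2 V)) (replaceO G c o oT) := by
  constructor
  · rintro u v (⟨h, _⟩ | h)
    · exact ho.1 u v h
    · exact (aux_oT_mem hoT h).1
  · intro u v he
    have he' : s(u, v) ∈ G.edges := he
    by_cases hu : u ∈ c.supp
    · have hv : v ∈ c.supp := (aux_mem_supp_iff_of_adj c he').1 hu
      have hce : s(u, v) ∈ G.compEdges c := by
        refine ⟨he', fun x hx => ?_⟩
        rcases Sym2.mem_iff.1 hx with rfl | rfl
        · exact hu
        · exact hv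
      have h1 : replaceO G c o oT u v ↔ oT u v := by
        simp [replaceO, hu, hv]
      have h2 : replaceO G c o oT v u ↔ oT v u := by
        simp [replaceO, hu, hv]
      rw [h1, h2]
      exact hoT.2 u v hce
    · have hv : v ∉ c.supp := fun hv => hu ((aux_mem_supp_iff_of_adj c he').2 hv)
      have h1 : replaceO G c o oT u v ↔ o u v := by
        constructor
        · rintro (⟨h, _⟩ | h)
          · exact h
          · exact absurd (aux_oT_mem hoT h).2.1 hu
        · intro h; exact Or.inl ⟨h, Or.inl hu⟩
      have h2 : replaceO G c o oT v u ↔ o v u := by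
        constructor
        · rintro (⟨h, _⟩ | h)
          · exact h
          · exact absurd (aux_oT_mem hoT h).2.2 hu
        · intro h; exact Or.inl ⟨h, Or.inr hu⟩
      rw [h1, h2]
      exact ho.2 u v he

lemma aux_inheritO_replace_self {c : G.edgeGraph.ConnectedComponent} {o oT : V → V → Prop}
    (hoT : OrientsEdges (G.compEdges c) oT) :
    inheritO G c (replaceO G c o oT) = oT := by
  funext u v
  apply propext
  constructor
  · rintro ⟨⟨_, h⟩ | h, hu, hv⟩
    · rcases h with h | h
      · exact absurd hu h
      · exact absurd hv h
    · exact h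
  · intro h
    obtain ⟨_, hu, hv⟩ := aux_oT_mem hoT h
    exact ⟨Or.inr h, hu, hv⟩

lemma aux_inheritO_replace_other {c c' : G.edgeGraph.ConnectedComponent} (hne : c' ≠ c)
    {o oT : V → V → Prop} (hoT : OrientsEdges (G.compEdges c) oT) :
    inheritO G c' (replaceO G c o oT) = inheritO G c' o := by
  funext u v
  apply propext
  constructor
  · rintro ⟨⟨h, _⟩ | h, hu, hv⟩
    · exact ⟨h, hu, hv⟩
    · exact absurd (aux_oT_mem hoT h).2.1 (aux_supp_disj hne hu)
  · rintro ⟨h, hu, hv⟩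
    exact ⟨Or.inl ⟨h, Or.inl (aux_supp_disj hne hu)⟩, hu, hv⟩

lemma aux_Rw_bound [Fintype V] [DecidableEq V] (A : V → V → Prop) (w : V → ℕ) :
    Rw A w ≤ 2 * ∑ v, Nat.choose (w v) 2 +
      ∑ p ∈ Finset.univ.offDiag, w p.1 * w p.2 := by
  unfold Rw
  refine Nat.add_le_add_left (Finset.sum_le_sum fun p _ => ?_) _
  have hk : kappa A p.1 p.2 ≤ 1 := by unfold kappa; split <;> simp
  calc w p.1 * w p.2 * kappa A p.1 p.2 ≤ w p.1 * w p.2 * 1 :=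
        Nat.mul_le_mul_left _ hk
    _ = w p.1 * w p.2 := by ring

lemma aux_exists_orients [Fintype V] [DecidableEq V] (G : MixedGraph V) :
    ∃ o, OrientsEdges (G.edges : Set (Sym2 V)) o := by
  let e := Fintype.equivFin V
  refine ⟨fun u v => s(u, v) ∈ G.edges ∧ e u < e v, fun u v h => h.1, ?_⟩
  intro u v he
  have he' : s(u, v) ∈ G.edges := he
  have hne : u ≠ v := fun h => G.edges_not_diag _ he' (by simp [h])
  have hne' : e u ≠ e v := fun h => hne (e.injective h)
  constructor
  · rintro ⟨_, h⟩ ⟨_, h'⟩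
    exact absurd h' (not_lt.2 h.le)
  · intro h
    refine ⟨he', ?_⟩
    by_contra hlt
    rcases hne'.lt_or_gt with h1 | h1
    · exact hlt h1
    · exact h ⟨by rwa [Sym2.eq_swap] at he', h1⟩

end Aux

/-- Given an optimal replacement set `𝒯 c` for every undirected component `c` of a
mixed graph `(G, w)`, there is an optimal orientation of `G` whose inherited
orientation on each undirected component `c` belongs to `𝒯 c`. -/
theorem stmt13 {V : Type*} [Fintype V] [DecidableEq V] (G : MixedGraph V) (w : V → ℕ)
    (𝒯 : ∀ _ : G.edgeGraph.ConnectedComponent, Set (V → V → Prop))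
    (h𝒯 : ∀ c, IsOptReplacementSet G w c (𝒯 c)) :
    ∃ o, OrientsEdges (G.edges : Set (Sym2 V)) o ∧
      (∀ o', OrientsEdges (G.edges : Set (Sym2 V)) o' →
        Rw (G.dig o') w ≤ Rw (G.dig o) w) ∧
      ∀ c : G.edgeGraph.ConnectedComponent, inheritO G c o ∈ 𝒯 c := by
  haveI : Finite G.edgeGraph.ConnectedComponent := Quot.finite _
  -- first, get an optimal orientation
  obtain ⟨o0, ho0, hmax⟩ : ∃ o, OrientsEdges (G.edges : Set (Sym2 V)) o ∧
      ∀ o', OrientsEdges (G.edges : Set (Sym2 V)) o' →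
        Rw (G.dig o') w ≤ Rw (G.dig o) w := by
    set S : Set ℕ :=
      {n | ∃ o, OrientsEdges (G.edges : Set (Sym2 V)) o ∧ Rw (G.dig o) w = n} with hS
    have hne : S.Nonempty := by
      obtain ⟨o, ho⟩ := aux_exists_orients G
      exact ⟨Rw (G.dig o) w, o, ho, rfl⟩
    have hbdd : BddAbove S := by
      refine ⟨2 * ∑ v, Nat.choose (w v) 2 +
        ∑ p ∈ Finset.univ.offDiag, w p.1 * w p.2, ?_⟩
      rintro n ⟨o, _, rfl⟩
      exact aux_Rw_bound _ w
    obtain ⟨o, ho, hRw⟩ := Nat.sSup_mem hne hbdd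
    exact ⟨o, ho, fun o' ho' => hRw ▸ le_csSup hbdd ⟨o', ho', rfl⟩⟩
  suffices h : ∀ n (o : V → V → Prop), OrientsEdges (G.edges : Set (Sym2 V)) o →
      (∀ o', OrientsEdges (G.edges : Set (Sym2 V)) o' →
        Rw (G.dig o') w ≤ Rw (G.dig o) w) →
      ({c | inheritO G c o ∉ 𝒯 c}).ncard ≤ n →
      ∃ o, OrientsEdges (G.edges : Set (Sym2 V)) o ∧
        (∀ o', OrientsEdges (G.edges : Set (Sym2 V)) o' →
          Rw (G.dig o') w ≤ Rw (G.dig o) w) ∧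
        ∀ c : G.edgeGraph.ConnectedComponent, inheritO G c o ∈ 𝒯 c by
    exact h _ o0 ho0 hmax le_rfl
  intro n
  induction n with
  | zero =>
    intro o ho hopt hcard
    refine ⟨o, ho, hopt, fun c => ?_⟩
    by_contra hc
    have hpos : 0 < ({c | inheritO G c o ∉ 𝒯 c}).ncard :=
      (Set.ncard_pos (Set.toFinite _)).2 ⟨c, hc⟩
    omega
  | succ n ih =>
    intro o ho hopt hcard
    by_cases hS : {c | inheritO G c o ∉ 𝒯 c}.Nonempty
    · obtain ⟨c, hc⟩ := hS
      obtain ⟨oT, hoTmem, hle⟩ := (h𝒯 c).2 o ho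
      have hoT := (h𝒯 c).1 oT hoTmem
      have ho2 : OrientsEdges (G.edges : Set (Sym2 V)) (replaceO G c o oT) :=
        aux_replaceO_orients ho hoT
      have hopt2 : ∀ o', OrientsEdges (G.edges : Set (Sym2 V)) o' →
          Rw (G.dig o') w ≤ Rw (G.dig (replaceO G c o oT)) w :=
        fun o' h' => le_trans (hopt o' h') hle
      refine ih (replaceO G c o oT) ho2 hopt2 ?_
      have hsub : {c' | inheritO G c' (replaceO G c o oT) ∉ 𝒯 c'} ⊆
          {c' | inheritO G c' o ∉ 𝒯 c'} \ {c} := by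
        intro c' hc'
        by_cases h : c' = c
        · subst h
          exfalso
          apply hc'
          rw [aux_inheritO_replace_self hoT]
          exact hoTmem
        · refine ⟨?_, h⟩
          rwa [Set.mem_setOf_eq, aux_inheritO_replace_other h hoT] at hc'
      have h1 : ({c' | inheritO G c' (replaceO G c o oT) ∉ 𝒯 c'}).ncard ≤
          ({c' | inheritO G c' o ∉ 𝒯 c'} \ {c}).ncard :=
        Set.ncard_le_ncard hsub (Set.toFinite _)
      have h2 : ({c' | inheritO G c' o ∉ 𝒯 c'} \ {c}).ncard <
          ({c' | inheritO G c' o ∉ 𝒯 c'}).ncard :=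
        Set.ncard_diff_singleton_lt_of_mem hc (Set.toFinite _)
      omega
    · refine ⟨o, ho, hopt, fun c => ?_⟩
      by_contra h
      exact hS ⟨c, h⟩
end
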